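/- arXiv:2009.10274 — 5 statements merged into one kernel-verified Lean document; each statement's English description precedes it below -/
import Mathlib

section
/- For positive definite matrices A, B and t ∈ [0,1], A ♮_t B = B ♮_{1-t} A. -/
open scoped Matrix.Norms.L2Operator ComplexOrder

variable {n : Type*} [Fintype n] [DecidableEq n]

/-- Real power of a (Hermitian) matrix via the continuous functional calculus. -/
noncomputable def mpow (A : Matrix n n ℂ) (t : ℝ) : Matrix n n ℂ :=
  cfc (fun x : ℝ => x ^ t) A

/-- Matrix logarithm via the continuous functional calculus. -/
noncomputable def mlog (A : Matrix n n ℂ) : Matrix n n ℂ :=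
  cfc Real.log A

/-- The geometric mean `A # B = A^{1/2} (A^{-1/2} B A^{-1/2})^{1/2} A^{1/2}`. -/
noncomputable def geo (A B : Matrix n n ℂ) : Matrix n n ℂ :=
  mpow A (1/2) * mpow (mpow A (-(1/2)) * B * mpow A (-(1/2))) (1/2) * mpow A (1/2)

/-- The weighted geometric mean `A #ₜ B = A^{1/2} (A^{-1/2} B A^{-1/2})^t A^{1/2}`. -/
noncomputable def wgeo (t : ℝ) (A B : Matrix n n ℂ) : Matrix n n ℂ :=
  mpow A (1/2) * mpow (mpow A (-(1/2)) * B * mpow A (-(1/2))) t * mpow A (1/2)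

/-- The weighted spectral geometric mean `A ♮ₜ B = (A⁻¹ # B)^t A (A⁻¹ # B)^t`. -/
noncomputable def sgeo (t : ℝ) (A B : Matrix n n ℂ) : Matrix n n ℂ :=
  mpow (geo A⁻¹ B) t * A * mpow (geo A⁻¹ B) t

/-- Semi-metric `d(A,B) = 2 ‖log (A⁻¹ # B)‖` (operator norm). -/
noncomputable def dsm (A B : Matrix n n ℂ) : ℝ :=
  2 * ‖mlog (geo A⁻¹ B)‖

/-- Loewner order: `Loewner A B` means `A ≤ B`, i.e. `B - A` is positive semidefinite. -/
def Loewner (A B : Matrix n n ℂ) : Prop := (B - A).PosSemidef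

/-! ### Auxiliary lemmas -/

open Matrix

private lemma finCont {s : Set ℝ} (hs : s.Finite) (f : ℝ → ℝ) : ContinuousOn f s := by
  haveI := hs.to_subtype
  exact continuousOn_iff_continuous_restrict.mpr continuous_of_discreteTopology

private lemma specFin (A : Matrix n n ℂ) : (spectrum ℝ A).Finite :=
  Matrix.finite_real_spectrum

private lemma contOn (f : ℝ → ℝ) (A : Matrix n n ℂ) : ContinuousOn f (spectrum ℝ A) :=
  finCont (specFin A) f

private lemma sa {A : Matrix n n ℂ} (hA : A.PosDef) : IsSelfAdjoint A := hA.isHermitian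

private lemma specPos {A : Matrix n n ℂ} (hA : A.PosDef) : ∀ x ∈ spectrum ℝ A, 0 < x := by
  intro x hx
  rw [hA.isHermitian.spectrum_real_eq_range_eigenvalues] at hx
  obtain ⟨i, rfl⟩ := hx
  exact hA.eigenvalues_pos i

private lemma posDefConj' {A : Matrix n n ℂ} (hA : A.PosDef) {B : Matrix n n ℂ}
    (hB : IsUnit B) : (Bᴴ * A * B).PosDef := by
  exact hA.conjTranspose_mul_mul_same (Matrix.mulVec_injective_iff_isUnit.mpr hB)

private lemma posDefConj {A : Matrix n n ℂ} (hA : A.PosDef) {B : Matrix n n ℂ}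
    (hB : IsUnit B) : (B * A * Bᴴ).PosDef := by
  simpa only [Matrix.conjTranspose_conjTranspose]
    using posDefConj' hA ((Matrix.isUnit_conjTranspose _).mpr hB)

private lemma conjPD {M C : Matrix n n ℂ} (hM : M.PosDef) (hC : C.PosDef) :
    (C * M * C).PosDef := by
  have h := posDefConj hM hC.isUnit
  rwa [hC.isHermitian.eq] at h

private lemma cfcPosDef {A : Matrix n n ℂ} (hA : A.PosDef) {f : ℝ → ℝ}
    (hf : ∀ x ∈ spectrum ℝ A, 0 < f x) : (cfc f A).PosDef := by
  rw [hA.isHermitian.cfc_eq, Matrix.IsHermitian.cfc]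
  have hU : IsUnit (hA.isHermitian.eigenvectorUnitary : Matrix n n ℂ) :=
    ⟨⟨_, star (hA.isHermitian.eigenvectorUnitary : Matrix n n ℂ),
      (Matrix.mem_unitaryGroup_iff).mp (hA.isHermitian.eigenvectorUnitary).2,
      (Matrix.mem_unitaryGroup_iff').mp (hA.isHermitian.eigenvectorUnitary).2⟩, rfl⟩
  have hd : (Matrix.diagonal (RCLike.ofReal ∘ f ∘ hA.isHermitian.eigenvalues) :
      Matrix n n ℂ).PosDef := by
    refine Matrix.PosDef.diagonal fun i => ?_
    exact RCLike.ofReal_pos.mpr (hf _ (hA.isHermitian.eigenvalues_mem_spectrum_real i))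
  have h := posDefConj hd hU
  rwa [← Matrix.star_eq_conjTranspose] at h

private lemma mpow_mul_mpow {A : Matrix n n ℂ} (hA : A.PosDef) (s t : ℝ) :
    mpow A s * mpow A t = mpow A (s + t) := by
  unfold mpow
  rw [← cfc_mul _ _ A (contOn _ A) (contOn _ A)]
  exact cfc_congr fun x hx => (Real.rpow_add (specPos hA x hx) s t).symm

private lemma mpow_zero {A : Matrix n n ℂ} (hA : A.PosDef) : mpow A 0 = 1 := by
  unfold mpow
  rw [cfc_congr (g := fun _ : ℝ => (1:ℝ)) fun x _ => Real.rpow_zero x]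
  exact cfc_const_one ℝ A (sa hA)

private lemma mpow_one {A : Matrix n n ℂ} (hA : A.PosDef) : mpow A 1 = A := by
  unfold mpow
  rw [cfc_congr (g := fun x : ℝ => x) fun x _ => Real.rpow_one x]
  exact cfc_id' ℝ A (sa hA)

private lemma mpow_posDef {A : Matrix n n ℂ} (hA : A.PosDef) (t : ℝ) :
    (mpow A t).PosDef :=
  cfcPosDef hA fun x hx => Real.rpow_pos_of_pos (specPos hA x hx) t

private lemma inv_eq_cfc {A : Matrix n n ℂ} (hA : A.PosDef) :
    A⁻¹ = cfc (fun x : ℝ => x⁻¹) A := by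
  have h1 : cfc (fun x : ℝ => x⁻¹) A * A = 1 := by
    calc cfc (fun x : ℝ => x⁻¹) A * A
        = cfc (fun x : ℝ => x⁻¹) A * cfc (fun x : ℝ => x) A := by
          rw [cfc_id' ℝ A (sa hA)]
      _ = cfc (fun x : ℝ => x⁻¹ * x) A := (cfc_mul _ _ A (contOn _ A) (contOn _ A)).symm
      _ = cfc (fun _ : ℝ => (1:ℝ)) A := cfc_congr fun x hx =>
          inv_mul_cancel₀ (specPos hA x hx).ne'
      _ = 1 := cfc_const_one ℝ A (sa hA)
  exact Matrix.inv_eq_left_inv h1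

private lemma mpow_inv {A : Matrix n n ℂ} (hA : A.PosDef) (t : ℝ) :
    mpow A⁻¹ t = mpow A (-t) := by
  unfold mpow
  calc cfc (fun x : ℝ => x ^ t) A⁻¹
      = cfc (fun x : ℝ => x ^ t) (cfc (fun x : ℝ => x⁻¹) A) := by rw [← inv_eq_cfc hA]
    _ = cfc (fun x : ℝ => (x⁻¹) ^ t) A :=
        (cfc_comp' _ _ A (finCont ((specFin A).image _) _) (contOn _ A) (sa hA)).symm
    _ = cfc (fun x : ℝ => x ^ (-t)) A := cfc_congr fun x hx => by
        rw [Real.inv_rpow (specPos hA x hx).le, ← Real.rpow_neg (specPos hA x hx).le]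

private lemma mpow_sq_half {X : Matrix n n ℂ} (hX : X.PosDef) :
    mpow (X * X) (1/2) = X := by
  have h1 : X * X = cfc (fun x : ℝ => x * x) X := by
    rw [cfc_mul _ _ X (contOn _ X) (contOn _ X), cfc_id' ℝ X (sa hX)]
  unfold mpow
  rw [h1, ← cfc_comp' _ _ X (finCont ((specFin X).image _) _) (contOn _ X) (sa hX)]
  calc cfc (fun x : ℝ => (x * x) ^ (1/2 : ℝ)) X
      = cfc (fun x : ℝ => x) X := by
        refine cfc_congr fun x hx => ?_
        have h := (specPos hX x hx).le
        rw [← pow_two, ← Real.rpow_natCast x 2, ← Real.rpow_mul h]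
        norm_num
    _ = X := cfc_id' ℝ X (sa hX)

private lemma half_cancel₁ {A : Matrix n n ℂ} (hA : A.PosDef) :
    mpow A (-(1/2)) * mpow A (1/2) = 1 := by
  rw [mpow_mul_mpow hA]
  norm_num [mpow_zero hA]

private lemma half_cancel₂ {A : Matrix n n ℂ} (hA : A.PosDef) :
    mpow A (1/2) * mpow A (-(1/2)) = 1 := by
  rw [mpow_mul_mpow hA]
  norm_num [mpow_zero hA]

private lemma half_mul_half {A : Matrix n n ℂ} (hA : A.PosDef) :
    mpow A (1/2) * mpow A (1/2) = A := by
  rw [mpow_mul_mpow hA]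
  norm_num [mpow_one hA]

private lemma geo_eq {A : Matrix n n ℂ} (hA : A.PosDef) (B : Matrix n n ℂ) :
    geo A⁻¹ B = mpow A (-(1/2)) * mpow (mpow A (1/2) * B * mpow A (1/2)) (1/2) *
      mpow A (-(1/2)) := by
  unfold geo
  rw [mpow_inv hA (1/2), mpow_inv hA (-(1/2)), neg_neg]

private lemma geo_posDef {A B : Matrix n n ℂ} (hA : A.PosDef) (hB : B.PosDef) :
    (geo A⁻¹ B).PosDef := by
  rw [geo_eq hA]
  exact conjPD (mpow_posDef (conjPD hB (mpow_posDef hA _)) _) (mpow_posDef hA _)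

private lemma geo_mul {A B : Matrix n n ℂ} (hA : A.PosDef) (hB : B.PosDef) :
    geo A⁻¹ B * A * geo A⁻¹ B = B := by
  have hM : (mpow A (1/2) * B * mpow A (1/2)).PosDef := conjPD hB (mpow_posDef hA _)
  rw [geo_eq hA]
  set P := mpow A (1/2) with hP
  set Q := mpow A (-(1/2)) with hQ
  set S := mpow (P * B * P) (1/2) with hS
  have hQAQ : Q * A * Q = 1 := by
    conv_lhs => rw [show A = mpow A 1 from (mpow_one hA).symm]
    rw [hQ, mpow_mul_mpow hA, mpow_mul_mpow hA]
    norm_num [mpow_zero hA]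
  have hSS : S * S = P * B * P := by
    rw [hS, mpow_mul_mpow hM]
    norm_num [mpow_one hM]
  have hQP : Q * P = 1 := half_cancel₁ hA
  have hPQ : P * Q = 1 := half_cancel₂ hA
  calc Q * S * Q * A * (Q * S * Q)
      = Q * S * (Q * A * Q) * S * Q := by noncomm_ring
    _ = Q * S * S * Q := by rw [hQAQ]; noncomm_ring
    _ = Q * (P * B * P) * Q := by rw [mul_assoc Q S S, hSS]
    _ = (Q * P) * B * (P * Q) := by noncomm_ring
    _ = B := by rw [hQP, hPQ, one_mul, mul_one]

private lemma geo_inv {A B : Matrix n n ℂ} (hA : A.PosDef) (hB : B.PosDef) :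
    geo B⁻¹ A = (geo A⁻¹ B)⁻¹ := by
  have hX : (geo A⁻¹ B).PosDef := geo_posDef hA hB
  have hXAX : geo A⁻¹ B * A * geo A⁻¹ B = B := geo_mul hA hB
  set X := geo A⁻¹ B with hXdef
  have hdet : IsUnit X.det := hX.det_pos.ne'.isUnit
  have hXinv : X⁻¹.PosDef := hX.inv
  have hA' : A = X⁻¹ * B * X⁻¹ := by
    calc A = (X⁻¹ * X) * A * (X * X⁻¹) := by
          rw [Matrix.nonsing_inv_mul X hdet, Matrix.mul_nonsing_inv X hdet, one_mul, mul_one]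
      _ = X⁻¹ * (X * A * X) * X⁻¹ := by noncomm_ring
      _ = X⁻¹ * B * X⁻¹ := by rw [hXAX]
  rw [geo_eq hB]
  set PB := mpow B (1/2) with hPB
  set QB := mpow B (-(1/2)) with hQB
  have key : PB * A * PB = (PB * X⁻¹ * PB) * (PB * X⁻¹ * PB) := by
    rw [hA']
    conv_rhs => rw [show PB * X⁻¹ * PB * (PB * X⁻¹ * PB)
      = PB * X⁻¹ * (PB * PB) * X⁻¹ * PB by noncomm_ring]
    rw [half_mul_half hB]
    noncomm_ring
  have hW : (PB * X⁻¹ * PB).PosDef := by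
    have := conjPD hXinv (mpow_posDef hB (1/2))
    rwa [← hPB] at this
  rw [key, mpow_sq_half hW]
  calc QB * (PB * X⁻¹ * PB) * QB
      = (QB * PB) * X⁻¹ * (PB * QB) := by noncomm_ring
    _ = X⁻¹ := by rw [half_cancel₁ hB, half_cancel₂ hB, one_mul, mul_one]

/-- `A ♮ₜ B = B ♮_{1-t} A`. -/
theorem stmt6 (A B : Matrix n n ℂ) (hA : A.PosDef) (hB : B.PosDef)
    {t : ℝ} (ht : t ∈ Set.Icc (0:ℝ) 1) :
    sgeo t A B = sgeo (1 - t) B A := by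
  have hX : (geo A⁻¹ B).PosDef := geo_posDef hA hB
  have hXAX : geo A⁻¹ B * A * geo A⁻¹ B = B := geo_mul hA hB
  unfold sgeo
  rw [geo_inv hA hB]
  set X := geo A⁻¹ B with hXdef
  rw [mpow_inv hX, show -(1 - t) = t - 1 by ring]
  have h2 : mpow X (t - 1) * X = mpow X t := by
    nth_rewrite 2 [← mpow_one hX]
    rw [mpow_mul_mpow hX]
    norm_num
  have h3 : X * mpow X (t - 1) = mpow X t := by
    nth_rewrite 1 [← mpow_one hX]
    rw [mpow_mul_mpow hX]
    ring_nf
  calc mpow X t * A * mpow X t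
      = (mpow X (t - 1) * X) * A * (X * mpow X (t - 1)) := by rw [h2, h3]
    _ = mpow X (t - 1) * (X * A * X) * mpow X (t - 1) := by noncomm_ring
    _ = mpow X (t - 1) * B * mpow X (t - 1) := by rw [hXAX]
end

section
/- The map d(A,B) = 2‖log(A^{-1} # B)‖ on pairs of positive definite matrices (with ‖·‖ the operator norm) is a semi-metric: d(A,B) ≥ 0, d(A,B) = 0 if and only if A = B, and d(A,B) = d(B,A). -/
open scoped Matrix.Norms.L2Operator ComplexOrder

variable {n : Type*} [Fintype n] [DecidableEq n]

namespace Aux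
open scoped Matrix

lemma contOn (f : ℝ → ℝ) (A : Matrix n n ℂ) : ContinuousOn f (spectrum ℝ A) :=
  Matrix.finite_real_spectrum (A := A) |>.continuousOn f

lemma contOn' (f g : ℝ → ℝ) (A : Matrix n n ℂ) : ContinuousOn f (g '' spectrum ℝ A) :=
  (Matrix.finite_real_spectrum (A := A) |>.image g).continuousOn f

lemma sa_of_posDef {A : Matrix n n ℂ} (hA : A.PosDef) : IsSelfAdjoint A := hA.isHermitian

lemma spec_pos {A : Matrix n n ℂ} (hA : A.PosDef) : spectrum ℝ A ⊆ Set.Ioi 0 := by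
  rw [Matrix.IsHermitian.spectrum_real_eq_range_eigenvalues hA.isHermitian]
  rintro x ⟨i, rfl⟩
  exact hA.eigenvalues_pos i

lemma posDef_conj {A : Matrix n n ℂ} (hA : A.PosDef) {B : Matrix n n ℂ} (hB : IsUnit B) :
    (B * A * Bᴴ).PosDef := by
  rw [Matrix.posDef_iff_dotProduct_mulVec]
  refine ⟨?_, fun x hx => ?_⟩
  · show (B * A * Bᴴ)ᴴ = _
    simp [Matrix.conjTranspose_mul, hA.isHermitian.eq, Matrix.mul_assoc]
  · have hx' : Bᴴ *ᵥ x ≠ 0 := by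
      intro h
      apply hx
      have hBu : IsUnit Bᴴ := (Matrix.isUnit_conjTranspose B).mpr hB
      have := Matrix.mulVec_injective_iff_isUnit.mpr hBu
      exact this (by simpa using h)
    have := (Matrix.posDef_iff_dotProduct_mulVec.mp hA).2 hx'
    simpa [Matrix.star_mulVec, Matrix.mulVec_mulVec, Matrix.dotProduct_mulVec,
      Matrix.vecMul_vecMul, Matrix.mul_assoc] using this

lemma posDef_of_spec {A : Matrix n n ℂ} (h1 : IsSelfAdjoint A)
    (h2 : spectrum ℝ A ⊆ Set.Ioi 0) : A.PosDef := by
  have hH : A.IsHermitian := h1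
  have heig : ∀ i, 0 < hH.eigenvalues i := fun i =>
    h2 (hH.eigenvalues_mem_spectrum_real i)
  rw [hH.spectral_theorem]
  refine posDef_conj ?_ ?_
  · rw [Matrix.posDef_diagonal_iff]
    intro i
    simpa using Complex.zero_lt_real.mpr (heig i)
  · exact (Unitary.toUnits (Matrix.IsHermitian.eigenvectorUnitary hH)).isUnit

lemma mpow_posDef {A : Matrix n n ℂ} (hA : A.PosDef) (t : ℝ) : (mpow A t).PosDef := by
  refine posDef_of_spec (cfc_predicate _ _) ?_
  rw [mpow, cfc_map_spectrum (fun x : ℝ => x ^ t) A (hf := contOn _ A) (ha := sa_of_posDef hA)]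
  rintro x ⟨y, hy, rfl⟩
  exact Real.rpow_pos_of_pos (spec_pos hA hy) t

lemma mpow_mul_mpow {A : Matrix n n ℂ} (hA : A.PosDef) (s t : ℝ) :
    mpow A s * mpow A t = mpow A (s + t) := by
  rw [mpow, mpow, mpow, ← cfc_mul _ _ A (hf := contOn _ A) (hg := contOn _ A)]
  exact cfc_congr fun x hx => ((Real.rpow_add (spec_pos hA hx) s t).symm : _)

lemma mpow_zero {A : Matrix n n ℂ} (hA : A.PosDef) : mpow A 0 = 1 := by
  rw [mpow, ← cfc_one (R := ℝ) A (sa_of_posDef hA)]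
  exact cfc_congr fun x hx => Real.rpow_zero x

lemma mpow_one {A : Matrix n n ℂ} (hA : A.PosDef) : mpow A 1 = A := by
  rw [mpow]
  nth_rewrite 2 [← cfc_id ℝ A (sa_of_posDef hA)]
  exact cfc_congr fun x hx => Real.rpow_one x

lemma mpow_neg_one {A : Matrix n n ℂ} (hA : A.PosDef) : mpow A (-1) = A⁻¹ := by
  lift A to (Matrix n n ℂ)ˣ using hA.isUnit with u hu
  rw [mpow, ← Matrix.coe_units_inv, ← cfc_inv_id (R := ℝ) u (sa_of_posDef hA)]
  refine cfc_congr fun x hx => ?_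
  have hx0 : (0:ℝ) < x := spec_pos hA hx
  rw [Real.rpow_neg_one]

lemma mpow_mpow {A : Matrix n n ℂ} (hA : A.PosDef) (s t : ℝ) :
    mpow (mpow A s) t = mpow A (s * t) := by
  rw [mpow, mpow, mpow, ← cfc_comp _ _ A (ha := sa_of_posDef hA)
    (hg := contOn' _ _ A) (hf := contOn _ A)]
  refine cfc_congr fun x hx => ?_
  simp only [Function.comp_apply]
  exact (Real.rpow_mul (le_of_lt (spec_pos hA hx)) s t).symm

lemma mpow_inv {A : Matrix n n ℂ} (hA : A.PosDef) (t : ℝ) : mpow A⁻¹ t = mpow A (-t) := by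
  rw [← mpow_neg_one hA, mpow_mpow hA, neg_one_mul]

lemma mpow_conjT {A : Matrix n n ℂ} (t : ℝ) : (mpow A t)ᴴ = mpow A t :=
  (cfc_predicate (fun x : ℝ => x ^ t) A : IsSelfAdjoint _)


lemma inner_posDef {A B : Matrix n n ℂ} (hA : A.PosDef) (hB : B.PosDef) :
    (mpow A (-(1/2)) * B * mpow A (-(1/2))).PosDef := by
  have := posDef_conj hB (mpow_posDef hA (-(1/2))).isUnit
  rwa [mpow_conjT] at this

lemma geo_posDef {A B : Matrix n n ℂ} (hA : A.PosDef) (hB : B.PosDef) :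
    (geo A B).PosDef := by
  have h := posDef_conj (mpow_posDef (inner_posDef hA hB) (1/2))
    (mpow_posDef hA (1/2)).isUnit
  rw [mpow_conjT] at h
  rw [geo]
  exact h

lemma riccati {A B : Matrix n n ℂ} (hA : A.PosDef) (hB : B.PosDef) :
    geo A B * A⁻¹ * geo A B = B := by
  have h1 : ∀ X : Matrix n n ℂ, mpow A (1/2) * (mpow A (-(1/2)) * X) = X := fun X => by
    rw [← mul_assoc, mpow_mul_mpow hA]
    norm_num [mpow_zero hA]
  have h2 : ∀ X : Matrix n n ℂ, mpow A (-(1/2)) * (mpow A (1/2) * X) = X := fun X => by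
    rw [← mul_assoc, mpow_mul_mpow hA]
    norm_num [mpow_zero hA]
  have h3 : mpow A (1/2) * mpow A (-(1/2)) = 1 := by
    rw [mpow_mul_mpow hA]; norm_num [mpow_zero hA]
  set m := mpow A (-(1/2)) * B * mpow A (-(1/2)) with hm
  have hmPD : m.PosDef := inner_posDef hA hB
  have hm2 : ∀ X : Matrix n n ℂ, mpow m (1/2) * (mpow m (1/2) * X) = m * X := fun X => by
    rw [← mul_assoc, mpow_mul_mpow hmPD]
    norm_num [mpow_one hmPD]
  have hAinv : A⁻¹ = mpow A (-(1/2)) * mpow A (-(1/2)) := by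
    rw [mpow_mul_mpow hA, ← mpow_neg_one hA]; norm_num
  rw [geo, hAinv, ← hm]
  simp only [mul_assoc, h1, h2, hm2]
  have h3' : mpow A (-(1/2)) * mpow A (1/2) = 1 := by
    rw [mpow_mul_mpow hA]; norm_num [mpow_zero hA]
  rw [hm]
  simp only [mul_assoc, h2]
  rw [h3', mul_one]
  exact h1 B

lemma sqrt_unique {X : Matrix n n ℂ} (hX : X.PosDef) : X = mpow (X * X) (1/2) := by
  have h2 : X * X = mpow X 2 := by
    have := mpow_mul_mpow hX 1 1
    rw [mpow_one hX] at this
    rw [this]; norm_num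
  rw [h2, mpow_mpow hX]
  norm_num [mpow_one hX]

lemma riccati_unique {P B X : Matrix n n ℂ} (hP : P.PosDef) (hX : X.PosDef)
    (h : X * P⁻¹ * X = B) : X = geo P B := by
  have h1 : mpow P (1/2) * mpow P (-(1/2)) = 1 := by
    rw [mpow_mul_mpow hP]; norm_num [mpow_zero hP]
  have h2 : mpow P (-(1/2)) * mpow P (1/2) = 1 := by
    rw [mpow_mul_mpow hP]; norm_num [mpow_zero hP]
  have hPinv : P⁻¹ = mpow P (-(1/2)) * mpow P (-(1/2)) := by
    rw [mpow_mul_mpow hP, ← mpow_neg_one hP]; norm_num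
  have hY : (mpow P (-(1/2)) * X * mpow P (-(1/2))).PosDef := by
    have := posDef_conj hX (mpow_posDef hP (-(1/2))).isUnit
    rwa [mpow_conjT] at this
  have hYsq : (mpow P (-(1/2)) * X * mpow P (-(1/2))) *
      (mpow P (-(1/2)) * X * mpow P (-(1/2))) =
      mpow P (-(1/2)) * B * mpow P (-(1/2)) := by
    rw [← h, hPinv]
    simp only [mul_assoc]
  have key := sqrt_unique hY
  rw [hYsq] at key
  have hX' : mpow P (1/2) * (mpow P (-(1/2)) * X * mpow P (-(1/2))) * mpow P (1/2) = X := by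
    calc mpow P (1/2) * (mpow P (-(1/2)) * X * mpow P (-(1/2))) * mpow P (1/2)
        = (mpow P (1/2) * mpow P (-(1/2))) * X * (mpow P (-(1/2)) * mpow P (1/2)) := by
          simp only [mul_assoc]
      _ = X := by rw [h1, h2, one_mul, mul_one]
  rw [← hX', key, geo]

lemma mlog_one : mlog (1 : Matrix n n ℂ) = 0 := by
  rw [mlog, ← map_one (algebraMap ℝ (Matrix n n ℂ)), cfc_algebraMap, Real.log_one, map_zero]

lemma eq_one_of_mlog_eq_zero {C : Matrix n n ℂ} (hC : C.PosDef) (h : mlog C = 0) : C = 1 := by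
  have hid : C = cfc Real.exp (mlog C) := by
    rw [mlog, ← cfc_comp Real.exp Real.log C (ha := sa_of_posDef hC)
      (hg := contOn' _ _ C) (hf := contOn _ C),
      show cfc (Real.exp ∘ Real.log) C = cfc (fun x : ℝ => x) C from
        cfc_congr fun x hx => Real.exp_log (spec_pos hC hx),
      cfc_id' ℝ C (sa_of_posDef hC)]
  rw [h] at hid
  rw [hid, show (0 : Matrix n n ℂ) = algebraMap ℝ _ 0 from (map_zero _).symm, cfc_algebraMap,
    Real.exp_zero, map_one]

lemma mlog_inv {C : Matrix n n ℂ} (hC : C.PosDef) : mlog C⁻¹ = - mlog C := by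
  rw [← mpow_neg_one hC, mlog, mpow,
    ← cfc_comp Real.log (fun x : ℝ => x ^ (-1 : ℝ)) C (ha := sa_of_posDef hC)
      (hg := contOn' _ _ C) (hf := contOn _ C),
    show cfc (Real.log ∘ fun x : ℝ => x ^ (-1:ℝ)) C = cfc (fun x : ℝ => - Real.log x) C from
      cfc_congr fun x hx => by
        simp [Function.comp, Real.rpow_neg_one, Real.log_inv],
    cfc_neg]
  rfl

end Aux


/-- `d(A,B) = 2‖log(A⁻¹ # B)‖` is a semi-metric on positive
definite matrices. -/
theorem stmt9 (A B : Matrix n n ℂ) (hA : A.PosDef) (hB : B.PosDef) :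
    0 ≤ dsm A B ∧ (dsm A B = 0 ↔ A = B) ∧ dsm A B = dsm B A := by
  have hdetA : IsUnit A.det := (Matrix.isUnit_iff_isUnit_det A).mp hA.isUnit
  have hdetB : IsUnit B.det := (Matrix.isUnit_iff_isUnit_det B).mp hB.isUnit
  have hAi : A⁻¹.PosDef := hA.inv
  have hBi : B⁻¹.PosDef := hB.inv
  have hC : (geo A⁻¹ B).PosDef := Aux.geo_posDef hAi hB
  set C := geo A⁻¹ B with hCdef
  have hdetC : IsUnit C.det := (Matrix.isUnit_iff_isUnit_det C).mp hC.isUnit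
  have hCAC : C * A * C = B := by
    have := Aux.riccati hAi hB
    rwa [Matrix.nonsing_inv_nonsing_inv A hdetA] at this
  refine ⟨by rw [dsm]; positivity, ⟨fun h => ?_, fun h => ?_⟩, ?_⟩
  · -- dsm A B = 0 → A = B
    rw [dsm] at h
    have h0 : mlog C = 0 := by
      rw [← norm_eq_zero]
      linarith
    have : C = 1 := Aux.eq_one_of_mlog_eq_zero hC h0
    rw [this, one_mul, mul_one] at hCAC
    exact hCAC
  · -- A = B → dsm A B = 0
    subst h
    have h1 : (1 : Matrix n n ℂ) = geo A⁻¹ A := by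
      refine Aux.riccati_unique hAi Matrix.PosDef.one ?_
      rw [one_mul, mul_one, Matrix.nonsing_inv_nonsing_inv A hdetA]
    rw [dsm, ← h1, Aux.mlog_one, norm_zero, mul_zero]
  · -- symmetry
    have hgeo : geo B⁻¹ A = C⁻¹ := by
      refine (Aux.riccati_unique hBi hC.inv ?_).symm
      rw [Matrix.nonsing_inv_nonsing_inv B hdetB, ← hCAC]
      calc C⁻¹ * (C * A * C) * C⁻¹
          = (C⁻¹ * C) * A * (C * C⁻¹) := by simp only [mul_assoc]
        _ = A := by rw [Matrix.nonsing_inv_mul C hdetC, Matrix.mul_nonsing_inv C hdetC,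
              one_mul, mul_one]
    rw [dsm, dsm, hgeo, Aux.mlog_inv hC, norm_neg]
end

section
/- Let S be a Hermitian matrix and X a positive definite matrix. If S X S ≤ X in the Loewner order, then S ≤ I. -/
open scoped Matrix.Norms.L2Operator ComplexOrder Matrix

variable {n : Type*} [Fintype n] [DecidableEq n]

/-- if `S` is Hermitian, `X` positive definite and `S X S ≤ X`,
then `S ≤ I`. -/
theorem stmt15 (S X : Matrix n n ℂ) (hS : S.IsHermitian) (hX : X.PosDef)
    (h : Loewner (S * X * S) X) : Loewner S 1 := by
  have hM : (1 - S).IsHermitian := (Matrix.isHermitian_one).sub hS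
  refine hM.posSemidef_iff_eigenvalues_nonneg.mpr fun i => ?_
  set μ := hM.eigenvalues i with hμ
  set v : n → ℂ := ⇑(hM.eigenvectorBasis i) with hv
  have hv0 : v ≠ 0 := by
    have := hM.eigenvectorBasis.orthonormal.ne_zero i
    simpa [hv] using fun hz => this (by ext j; simp [hz])
  have hSv : S *ᵥ v = ((1 - μ : ℝ) : ℂ) • v := by
    have h1 : (1 - S) *ᵥ v = (μ : ℂ) • v := by
      simpa [hv] using hM.mulVec_eigenvectorBasis i
    have : S *ᵥ v = v - (μ : ℂ) • v := by
      rw [← h1]; simp [Matrix.sub_mulVec, Matrix.one_mulVec]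
    rw [this]; push_cast; rw [sub_smul, one_smul]
  -- quadratic form
  have hq : (star v ⬝ᵥ ((S * X * S) *ᵥ v)) = ((1-μ:ℝ):ℂ)^2 * (star v ⬝ᵥ (X *ᵥ v)) := by
    have hstep : (S * X * S) *ᵥ v = ((1-μ:ℝ):ℂ) • (S *ᵥ (X *ᵥ v)) := by
      rw [← Matrix.mulVec_mulVec, ← Matrix.mulVec_mulVec, hSv, Matrix.mulVec_smul,
        Matrix.mulVec_smul]
    rw [hstep, dotProduct_smul]
    have : star v ⬝ᵥ (S *ᵥ (X *ᵥ v)) = ((1-μ:ℝ):ℂ) * (star v ⬝ᵥ (X *ᵥ v)) := by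
      rw [Matrix.dotProduct_mulVec]
      have h2 : star v ᵥ* S = star (S *ᵥ v) := by rw [Matrix.star_mulVec, hS.eq]
      rw [h2, hSv, star_smul, smul_dotProduct]
      simp [smul_eq_mul]
    rw [this, smul_eq_mul]; ring
  have hq0 : (0:ℂ) < star v ⬝ᵥ (X *ᵥ v) := hX.dotProduct_mulVec_pos hv0
  have hle := h.dotProduct_mulVec_nonneg v
  rw [Matrix.sub_mulVec, dotProduct_sub, hq] at hle
  set q := star v ⬝ᵥ (X *ᵥ v) with hqdef
  rw [Complex.lt_def] at hq0
  rw [Complex.le_def] at hle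
  have hre : (0:ℝ) ≤ q.re - (1-μ)^2 * q.re := by
    have := hle.1
    simpa only [← Complex.ofReal_pow, Complex.re_ofReal_mul, Complex.sub_re,
      Complex.zero_re, sub_nonneg] using this
  have h3 : (1-μ)^2 ≤ 1 := by
    by_contra hc
    push_neg at hc
    nlinarith [hq0.1, hre, mul_pos hq0.1 (sub_pos.mpr hc)]
  show (0:ℝ) ≤ μ; nlinarith [h3, sq_nonneg μ]
end

section
/- Let A, B be positive definite matrices and t ∈ (0,1]. If A^{-1} ♮_t B ≤ A^{-1} in the Loewner order, then A^p # B^p ≤ I for every p ≥ 1. -/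
open scoped Matrix.Norms.L2Operator ComplexOrder

variable {n : Type*} [Fintype n] [DecidableEq n]

set_option linter.unusedSectionVars false
set_option maxHeartbeats 1000000

namespace Helper

open Matrix

variable {A B X Y H P : Matrix n n ℂ}

lemma spec_pos (hA : A.PosDef) : ∀ x ∈ spectrum ℝ A, 0 < x := by
  intro x hx
  rw [hA.isHermitian.spectrum_real_eq_range_eigenvalues] at hx
  obtain ⟨i, rfl⟩ := hx
  exact hA.eigenvalues_pos i

lemma contOn (c : ℝ) {s : Set ℝ} (hs : ∀ x ∈ s, 0 < x) :
    ContinuousOn (fun x : ℝ => x ^ c) s := fun x hx =>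
  (Real.continuousAt_rpow_const x c (Or.inl (hs x hx).ne')).continuousWithinAt

lemma isSelfAdjoint_of_posDef (hA : A.PosDef) : IsSelfAdjoint A := hA.isHermitian

lemma mpow_isSelfAdjoint (A : Matrix n n ℂ) (t : ℝ) : IsSelfAdjoint (mpow A t) :=
  cfc_predicate _ _

lemma mpow_isHermitian (A : Matrix n n ℂ) (t : ℝ) : (mpow A t).IsHermitian :=
  mpow_isSelfAdjoint A t

lemma mpow_conjTranspose (A : Matrix n n ℂ) (t : ℝ) : (mpow A t)ᴴ = mpow A t :=
  mpow_isHermitian A t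

lemma mpow_mul_mpow (hA : A.PosDef) (a b : ℝ) :
    mpow A a * mpow A b = mpow A (a + b) := by
  unfold mpow
  rw [← cfc_mul _ _ A (contOn a (spec_pos hA)) (contOn b (spec_pos hA))]
  exact cfc_congr fun x hx => (Real.rpow_add (spec_pos hA x hx) a b).symm

lemma mpow_zero (hA : A.PosDef) : mpow A 0 = 1 := by
  have h : (fun x : ℝ => x ^ (0:ℝ)) = (1 : ℝ → ℝ) := funext fun x => Real.rpow_zero x
  rw [mpow, h, cfc_one ℝ A (isSelfAdjoint_of_posDef hA)]

lemma mpow_one (hA : A.PosDef) : mpow A 1 = A := by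
  have h : (fun x : ℝ => x ^ (1:ℝ)) = (id : ℝ → ℝ) := funext fun x => Real.rpow_one x
  rw [mpow, h, cfc_id ℝ A (isSelfAdjoint_of_posDef hA)]

lemma mpow_mul_neg (hA : A.PosDef) (a : ℝ) : mpow A a * mpow A (-a) = 1 := by
  rw [mpow_mul_mpow hA, add_neg_cancel, mpow_zero hA]

lemma mpow_neg_mul (hA : A.PosDef) (a : ℝ) : mpow A (-a) * mpow A a = 1 := by
  rw [mpow_mul_mpow hA, neg_add_cancel, mpow_zero hA]

lemma isUnit_mpow (hA : A.PosDef) (a : ℝ) : IsUnit (mpow A a) :=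
  ⟨⟨mpow A a, mpow A (-a), mpow_mul_neg hA a, mpow_neg_mul hA a⟩, rfl⟩

lemma mpow_inv (hA : A.PosDef) (a : ℝ) : (mpow A a)⁻¹ = mpow A (-a) :=
  Matrix.inv_eq_right_inv (mpow_mul_neg hA a)

lemma mpow_neg_one (hA : A.PosDef) : mpow A (-1) = A⁻¹ := by
  have := mpow_inv hA 1
  rw [mpow_one hA] at this
  exact this.symm

lemma posDef_of_posSemidef_isUnit (h : P.PosSemidef) (hu : IsUnit P) : P.PosDef := by
  refine PosDef.of_dotProduct_mulVec_pos h.1 fun x hx => lt_of_le_of_ne (h.dotProduct_mulVec_nonneg x) fun he => hx ?_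
  have h0 : P *ᵥ x = 0 := (h.dotProduct_mulVec_zero_iff x).mp he.symm
  have : P⁻¹ * P = 1 := Matrix.nonsing_inv_mul P ((Matrix.isUnit_iff_isUnit_det P).mp hu)
  calc x = (P⁻¹ * P) *ᵥ x := by rw [this, Matrix.one_mulVec]
  _ = P⁻¹ *ᵥ (P *ᵥ x) := by rw [Matrix.mulVec_mulVec]
  _ = 0 := by rw [h0, Matrix.mulVec_zero]

lemma mpow_posDef (hA : A.PosDef) (a : ℝ) : (mpow A a).PosDef := by
  have h2 : mpow A (a/2) * mpow A (a/2) = mpow A a := by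
    rw [mpow_mul_mpow hA]; norm_num
  have hpsd : (mpow A a).PosSemidef := by
    rw [← h2]
    nth_rewrite 1 [← mpow_conjTranspose A (a/2)]
    exact Matrix.posSemidef_conjTranspose_mul_self _
  exact posDef_of_posSemidef_isUnit hpsd (isUnit_mpow hA a)

lemma mpow_mpow (hA : A.PosDef) (a b : ℝ) : mpow (mpow A a) b = mpow A (a * b) := by
  unfold mpow
  rw [← cfc_comp' (fun x : ℝ => x ^ b) (fun x : ℝ => x ^ a) A ?hg (contOn a (spec_pos hA))
    (isSelfAdjoint_of_posDef hA)]
  · exact cfc_congr fun x hx => (Real.rpow_mul (spec_pos hA x hx).le a b).symm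
  case hg =>
    refine contOn b fun y hy => ?_
    obtain ⟨x, hx, rfl⟩ := hy
    exact Real.rpow_pos_of_pos (spec_pos hA x hx) a

lemma mpow_spectrum (hA : A.PosDef) (a : ℝ) :
    spectrum ℝ (mpow A a) = (fun x : ℝ => x ^ a) '' spectrum ℝ A :=
  cfc_map_spectrum _ _ (isSelfAdjoint_of_posDef hA) (contOn a (spec_pos hA))

end Helper

namespace Helper

open Matrix

variable {A B X Y H P M N R S : Matrix n n ℂ}

lemma loewner_refl (A : Matrix n n ℂ) : Loewner A A := by
  unfold Loewner; rw [sub_self]; exact Matrix.PosSemidef.zero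

lemma loewner_trans (h1 : Loewner A B) (h2 : Loewner B X) : Loewner A X := by
  have := h2.add h1
  unfold Loewner
  rwa [sub_add_sub_cancel] at this

lemma loewner_conj (h : Loewner X Y) (M : Matrix n n ℂ) :
    Loewner (M * X * Mᴴ) (M * Y * Mᴴ) := by
  have : M * Y * Mᴴ - M * X * Mᴴ = M * (Y - X) * Mᴴ := by
    rw [Matrix.mul_sub, Matrix.sub_mul]
  unfold Loewner
  rw [this]
  exact h.mul_mul_conjTranspose_same M

lemma posSemidef_of_re_quad (hH : H.IsHermitian)
    (h : ∀ x : n → ℂ, 0 ≤ RCLike.re (dotProduct (star x) (H *ᵥ x))) :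
    H.PosSemidef := by
  refine PosSemidef.of_dotProduct_mulVec_nonneg hH fun x => ?_
  set z := dotProduct (star x) (H *ᵥ x) with hz
  have hsz : star z = z := by
    calc star z = star (star x ⬝ᵥ (H *ᵥ x)) := by rw [hz]
    _ = star (H *ᵥ x) ⬝ᵥ x := (Matrix.star_dotProduct (H *ᵥ x) x).symm
    _ = (star x ᵥ* Hᴴ) ⬝ᵥ x := by rw [Matrix.star_mulVec]
    _ = star x ⬝ᵥ (Hᴴ *ᵥ x) := (Matrix.dotProduct_mulVec _ _ _).symm
    _ = z := by rw [hH.eq, hz]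
  have him : RCLike.im z = 0 := by
    have := RCLike.conj_eq_iff_im (K := ℂ) (z := z)
    exact this.mp hsz
  rw [RCLike.nonneg_iff]
  exact ⟨h x, him⟩

lemma loewner_one_of_spectrum_le (hH : H.IsHermitian)
    (h : ∀ μ ∈ spectrum ℝ H, μ ≤ 1) : Loewner H 1 := by
  unfold Loewner
  set U : Matrix n n ℂ := (Matrix.IsHermitian.eigenvectorUnitary hH : Matrix n n ℂ) with hUdef
  have hU : U * star U = 1 := (Matrix.mem_unitaryGroup_iff).mp (Matrix.IsHermitian.eigenvectorUnitary hH).2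
  have hspec : H = U * Matrix.diagonal (RCLike.ofReal ∘ hH.eigenvalues) * star U := hH.spectral_theorem
  have key : 1 - H = U * Matrix.diagonal (fun i => 1 - (hH.eigenvalues i : ℂ)) * star U := by
    calc 1 - H = U * 1 * star U - U * Matrix.diagonal (RCLike.ofReal ∘ hH.eigenvalues) * star U := by
          rw [mul_one, hU, ← hspec]
    _ = U * (1 - Matrix.diagonal (RCLike.ofReal ∘ hH.eigenvalues)) * star U := by
          rw [Matrix.mul_sub, Matrix.sub_mul, mul_one]
    _ = U * Matrix.diagonal (fun i => 1 - (hH.eigenvalues i : ℂ)) * star U := by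
          rw [← Matrix.diagonal_one, Matrix.diagonal_sub]; rfl
  rw [key, Matrix.star_eq_conjTranspose]
  refine Matrix.PosSemidef.mul_mul_conjTranspose_same ?_ U
  refine Matrix.PosSemidef.diagonal fun i => ?_
  have : hH.eigenvalues i ≤ 1 := h _ (hH.eigenvalues_mem_spectrum_real i)
  show (0:ℂ) ≤ 1 - (hH.eigenvalues i : ℂ)
  rw [show ((1:ℂ) - (hH.eigenvalues i : ℂ)) = ((1 - hH.eigenvalues i : ℝ) : ℂ) by push_cast; ring]
  exact Complex.zero_le_real.mpr (by linarith)

lemma loewner_of_one_le_spectrum (hH : H.IsHermitian)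
    (h : ∀ μ ∈ spectrum ℝ H, 1 ≤ μ) : Loewner 1 H := by
  unfold Loewner
  set U : Matrix n n ℂ := (Matrix.IsHermitian.eigenvectorUnitary hH : Matrix n n ℂ) with hUdef
  have hU : U * star U = 1 := (Matrix.mem_unitaryGroup_iff).mp (Matrix.IsHermitian.eigenvectorUnitary hH).2
  have hspec : H = U * Matrix.diagonal (RCLike.ofReal ∘ hH.eigenvalues) * star U := hH.spectral_theorem
  have key : H - 1 = U * Matrix.diagonal (fun i => (hH.eigenvalues i : ℂ) - 1) * star U := by
    calc H - 1 = U * Matrix.diagonal (RCLike.ofReal ∘ hH.eigenvalues) * star U - U * 1 * star U := by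
          rw [mul_one, hU, ← hspec]
    _ = U * (Matrix.diagonal (RCLike.ofReal ∘ hH.eigenvalues) - 1) * star U := by
          rw [Matrix.mul_sub, Matrix.sub_mul, mul_one]
    _ = U * Matrix.diagonal (fun i => (hH.eigenvalues i : ℂ) - 1) * star U := by
          rw [← Matrix.diagonal_one, Matrix.diagonal_sub]; rfl
  rw [key, Matrix.star_eq_conjTranspose]
  refine Matrix.PosSemidef.mul_mul_conjTranspose_same ?_ U
  refine Matrix.PosSemidef.diagonal fun i => ?_
  have : 1 ≤ hH.eigenvalues i := h _ (hH.eigenvalues_mem_spectrum_real i)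
  show (0:ℂ) ≤ (hH.eigenvalues i : ℂ) - 1
  rw [show ((hH.eigenvalues i : ℂ) - 1) = ((hH.eigenvalues i - 1 : ℝ) : ℂ) by push_cast; ring]
  exact Complex.zero_le_real.mpr (by linarith)

lemma spectrum_le_one_of_loewner (hH : H.IsHermitian) (h : Loewner H 1) :
    ∀ μ ∈ spectrum ℝ H, μ ≤ 1 := by
  intro μ hμ
  rw [hH.spectrum_real_eq_range_eigenvalues] at hμ
  obtain ⟨i, rfl⟩ := hμ
  set v : n → ℂ := ⇑(hH.eigenvectorBasis i) with hv
  have hq := h.dotProduct_mulVec_nonneg v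
  have hmv : (1 - H) *ᵥ v = v - hH.eigenvalues i • v := by
    rw [Matrix.sub_mulVec, Matrix.one_mulVec, hv, hH.mulVec_eigenvectorBasis]
  have hvv : dotProduct (star v) v = 1 := by
    have h1 : (inner ℂ (hH.eigenvectorBasis i) (hH.eigenvectorBasis i) : ℂ) =
        dotProduct (star v) v := (EuclideanSpace.inner_eq_star_dotProduct _ _).trans (dotProduct_comm _ _)
    have h2 : (inner ℂ (hH.eigenvectorBasis i) (hH.eigenvectorBasis i) : ℂ) = ((1:ℝ) : ℂ) := by
      rw [inner_self_eq_norm_sq_to_K, hH.eigenvectorBasis.orthonormal.1 i]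
      norm_num
    rw [← h1, h2]; norm_num
  rw [hmv, dotProduct_sub, dotProduct_smul, hvv] at hq
  have hq' : (0:ℂ) ≤ ((1 - hH.eigenvalues i : ℝ) : ℂ) := by
    convert hq using 1
    push_cast [Complex.real_smul]
    ring
  have := Complex.zero_le_real.mp hq'
  linarith

end Helper

namespace Helper

open Matrix

variable {A B X Y H P M N R S U V : Matrix n n ℂ}

lemma opNorm_le_one (M : Matrix n n ℂ) (h : Loewner (Mᴴ * M) 1) : ‖M‖ ≤ 1 := by
  rw [Matrix.cstar_norm_def]
  refine ContinuousLinearMap.opNorm_le_bound _ zero_le_one fun x => ?_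
  rw [one_mul]
  have hsq : ‖Matrix.toEuclideanCLM (n := n) (𝕜 := ℂ) M x‖ ^ 2 ≤ ‖x‖ ^ 2 := by
    have hxq := h.dotProduct_mulVec_nonneg (WithLp.equiv 2 _ x)
    set y : n → ℂ := WithLp.equiv 2 _ x with hy
    rw [Matrix.sub_mulVec, dotProduct_sub, Matrix.one_mulVec] at hxq
    have hquad : dotProduct (star y) ((Mᴴ * M) *ᵥ y) ≤ dotProduct (star y) y :=
      sub_nonneg.mp hxq
    have hre : (dotProduct (star y) ((Mᴴ * M) *ᵥ y)).re
        ≤ (dotProduct (star y) y).re := (Complex.le_def.mp hquad).1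
    have e1 : ‖Matrix.toEuclideanCLM (n := n) (𝕜 := ℂ) M x‖ ^ 2
        = (dotProduct (star (M *ᵥ y)) (M *ᵥ y)).re := by
      rw [@norm_sq_eq_re_inner ℂ, EuclideanSpace.inner_eq_star_dotProduct, dotProduct_comm]
      rw [RCLike.re_to_complex]
      congr 2 <;> rw [Matrix.ofLp_toEuclideanCLM]
    have e2 : dotProduct (star (M *ᵥ y)) (M *ᵥ y)
        = dotProduct (star y) ((Mᴴ * M) *ᵥ y) := by
      rw [Matrix.star_mulVec, Matrix.dotProduct_mulVec, Matrix.vecMul_vecMul,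
        Matrix.dotProduct_mulVec]
    have e3 : ‖x‖ ^ 2 = (dotProduct (star y) y).re := by
      rw [@norm_sq_eq_re_inner ℂ, EuclideanSpace.inner_eq_star_dotProduct, dotProduct_comm, RCLike.re_to_complex]
      rfl
    rw [e1, e2, e3]
    exact hre
  nlinarith [norm_nonneg (Matrix.toEuclideanCLM (n := n) (𝕜 := ℂ) M x), norm_nonneg x, hsq]

lemma spectrum_le_one_of_similar (hH : H.IsHermitian) (hRS : S * R = 1)
    (hsim : H = R * N * S) (hN : ‖N‖ ≤ 1) : ∀ μ ∈ spectrum ℝ H, μ ≤ 1 := by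
  intro μ hμ
  rw [hH.spectrum_real_eq_range_eigenvalues] at hμ
  obtain ⟨i, rfl⟩ := hμ
  set μ := hH.eigenvalues i with hμdef
  set v : n → ℂ := ⇑(hH.eigenvectorBasis i) with hv
  have hv1 : H *ᵥ v = μ • v := hH.mulVec_eigenvectorBasis i
  have hRS' : R * S = 1 := mul_eq_one_comm.mp hRS
  set w : n → ℂ := S *ᵥ v with hw
  have hNeq : S * H * R = N := by
    rw [hsim]
    calc S * (R * N * S) * R = (S * R) * N * (S * R) := by noncomm_ring
    _ = N := by rw [hRS]; simp
  have hNw : N *ᵥ w = μ • w := by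
    calc N *ᵥ w = (S * H * R * S) *ᵥ v := by rw [hNeq, hw, Matrix.mulVec_mulVec]
    _ = (S * H) *ᵥ v := by rw [mul_assoc (S * H), hRS', mul_one]
    _ = S *ᵥ (H *ᵥ v) := by rw [Matrix.mulVec_mulVec]
    _ = μ • w := by rw [hv1, Matrix.mulVec_smul, hw]
  have hvv : dotProduct (star v) v = 1 := by
    have h1 : (inner ℂ (hH.eigenvectorBasis i) (hH.eigenvectorBasis i) : ℂ) =
        dotProduct (star v) v := (EuclideanSpace.inner_eq_star_dotProduct _ _).trans (dotProduct_comm _ _)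
    have h2 : (inner ℂ (hH.eigenvectorBasis i) (hH.eigenvectorBasis i) : ℂ) = ((1:ℝ) : ℂ) := by
      rw [inner_self_eq_norm_sq_to_K, hH.eigenvectorBasis.orthonormal.1 i]
      norm_num
    rw [← h1, h2]; norm_num
  have hw0 : w ≠ 0 := by
    intro h0
    have : v = 0 := by
      calc v = (R * S) *ᵥ v := by rw [hRS', Matrix.one_mulVec]
      _ = R *ᵥ w := by rw [← Matrix.mulVec_mulVec, hw]
      _ = 0 := by rw [h0, Matrix.mulVec_zero]
    rw [this] at hvv
    simp at hvv
  set w' : EuclideanSpace ℂ n := (WithLp.equiv 2 (n → ℂ)).symm w with hw'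
  have hnorm := Matrix.l2_opNorm_mulVec N w'
  have hww : N *ᵥ w' = μ • w := by
    have : (w' : n → ℂ) = w := rfl
    rw [show Matrix.mulVec N w' = Matrix.mulVec N w from rfl, hNw]
  have hle : |μ| * ‖w'‖ ≤ ‖N‖ * ‖w'‖ := by
    have e : ‖(EuclideanSpace.equiv n ℂ).symm (N *ᵥ w')‖ = |μ| * ‖w'‖ := by
      rw [hww]
      have : (EuclideanSpace.equiv n ℂ).symm (μ • w) = (μ:ℂ) • w' := by
        apply (EuclideanSpace.equiv n ℂ).injective
        simp only [ContinuousLinearEquiv.apply_symm_apply]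
        funext j
        simp [hw', Complex.real_smul]
      rw [this, norm_smul]
      simp
    rw [e] at hnorm
    exact hnorm
  have hwpos : 0 < ‖w'‖ := by
    rw [norm_pos_iff]
    intro h0
    apply hw0
    have := congrArg (WithLp.equiv 2 (n → ℂ)) (h0 : w' = 0)
    simpa [hw'] using this
  have habs : |μ| ≤ ‖N‖ := le_of_mul_le_mul_right (by exact hle) hwpos
  calc μ ≤ |μ| := le_abs_self μ
  _ ≤ ‖N‖ := habs
  _ ≤ 1 := hN

lemma pow_swap (U V : Matrix n n ℂ) (m : ℕ) : (U * V) ^ m * U = U * (V * U) ^ m := by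
  induction m with
  | zero => simp
  | succ k ih =>
    calc (U * V) ^ (k+1) * U = (U * V) ^ k * (U * V * U) := by rw [pow_succ]; noncomm_ring
    _ = (U * V) ^ k * U * (V * U) := by noncomm_ring
    _ = U * (V * U) ^ k * (V * U) := by rw [ih]
    _ = U * (V * U) ^ (k+1) := by rw [pow_succ]; noncomm_ring

lemma aeval_swap (U V : Matrix n n ℂ) (P : Polynomial ℝ) :
    Polynomial.aeval (U * V) P * U = U * Polynomial.aeval (V * U) P := by
  induction P using Polynomial.induction_on with
  | C r => simp only [Polynomial.aeval_C]; exact Algebra.commutes r U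
  | add p q hp hq => simp only [map_add, add_mul, mul_add, hp, hq]
  | monomial k r _ =>
    simp only [_root_.map_mul, map_pow, Polynomial.aeval_X, Polynomial.aeval_C]
    calc algebraMap ℝ (Matrix n n ℂ) r * (U * V) ^ (k+1) * U
        = algebraMap ℝ (Matrix n n ℂ) r * ((U * V) ^ (k+1) * U) := by rw [mul_assoc]
    _ = algebraMap ℝ (Matrix n n ℂ) r * (U * ((V * U) ^ (k+1))) := by rw [pow_swap]
    _ = (algebraMap ℝ (Matrix n n ℂ) r * U) * (V * U) ^ (k+1) := by rw [mul_assoc]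
    _ = (U * algebraMap ℝ (Matrix n n ℂ) r) * (V * U) ^ (k+1) := by
          rw [Algebra.commutes]
    _ = U * (algebraMap ℝ (Matrix n n ℂ) r * (V * U) ^ (k+1)) := by rw [mul_assoc]

lemma cfc_swap (hUV : IsSelfAdjoint (U * V)) (hVU : IsSelfAdjoint (V * U)) (f : ℝ → ℝ) :
    cfc f (U * V) * U = U * cfc f (V * U) := by
  classical
  set s : Finset ℝ := (Matrix.finite_real_spectrum (A := U*V)).toFinset ∪
    (Matrix.finite_real_spectrum (A := V*U)).toFinset with hs
  set P := Lagrange.interpolate s id f with hP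
  have h1 : cfc f (U*V) = Polynomial.aeval (U*V) P := by
    rw [← cfc_polynomial P (U*V) hUV]
    apply cfc_congr
    intro x hx
    exact (Lagrange.eval_interpolate_at_node f (Set.injOn_id _)
      (Finset.mem_union_left _ ((Matrix.finite_real_spectrum).mem_toFinset.mpr hx))).symm
  have h2 : cfc f (V*U) = Polynomial.aeval (V*U) P := by
    rw [← cfc_polynomial P (V*U) hVU]
    apply cfc_congr
    intro x hx
    exact (Lagrange.eval_interpolate_at_node f (Set.injOn_id _)
      (Finset.mem_union_right _ ((Matrix.finite_real_spectrum).mem_toFinset.mpr hx))).symm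
  rw [h1, h2]
  exact aeval_swap U V P

lemma isUnit_conjTranspose (hM : IsUnit M) : IsUnit (Mᴴ) := by
  rw [← Matrix.star_eq_conjTranspose]
  exact hM.star

lemma posDef_mul_conjTranspose_self (hM : IsUnit M) : (M * Mᴴ).PosDef :=
  posDef_of_posSemidef_isUnit (Matrix.posSemidef_self_mul_conjTranspose M)
    (hM.mul (isUnit_conjTranspose hM))

lemma posDef_conjTranspose_mul_self (hM : IsUnit M) : (Mᴴ * M).PosDef :=
  posDef_of_posSemidef_isUnit (Matrix.posSemidef_conjTranspose_mul_self M)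
    ((isUnit_conjTranspose hM).mul hM)

lemma mpow_conj_shift (hM : IsUnit M) (s : ℝ) :
    mpow (M * Mᴴ) s = M * mpow (Mᴴ * M) (s - 1) * Mᴴ := by
  have hMMt : (M * Mᴴ).PosDef := posDef_mul_conjTranspose_self hM
  calc mpow (M * Mᴴ) s = mpow (M * Mᴴ) (s-1) * mpow (M * Mᴴ) 1 := by
        rw [mpow_mul_mpow hMMt]; ring_nf
  _ = mpow (M * Mᴴ) (s-1) * (M * Mᴴ) := by rw [mpow_one hMMt]
  _ = (mpow (M * Mᴴ) (s-1) * M) * Mᴴ := by rw [mul_assoc]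
  _ = (M * mpow (Mᴴ * M) (s-1)) * Mᴴ := by
        unfold mpow
        rw [cfc_swap (hMMt.isHermitian) (posDef_conjTranspose_mul_self hM).isHermitian]

lemma posDef_conj (hX : X.PosDef) (hM : IsUnit M) : (M * X * Mᴴ).PosDef :=
  posDef_of_posSemidef_isUnit (hX.posSemidef.mul_mul_conjTranspose_same M)
    ((hM.mul hX.isUnit).mul (isUnit_conjTranspose hM))

lemma loewner_inv (hA : A.PosDef) (hB : B.PosDef) (h : Loewner A B) : Loewner B⁻¹ A⁻¹ := by
  set M := mpow B (-(1/2) : ℝ) with hM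
  have hMH : Mᴴ = M := mpow_conjTranspose B _
  have hMu : IsUnit M := isUnit_mpow hB _
  have hXpd : (M * A * M).PosDef := by
    have := posDef_conj hA hMu
    rwa [hMH] at this
  have step1 : Loewner (M * A * M) (M * B * M) := by
    have := loewner_conj h M
    rwa [hMH] at this
  have step2 : M * B * M = 1 := by
    nth_rewrite 1 [← mpow_one hB]
    rw [hM, mpow_mul_mpow hB, mpow_mul_mpow hB]
    norm_num
    exact mpow_zero hB
  rw [step2] at step1
  have hspec := spectrum_le_one_of_loewner hXpd.isHermitian step1
  have hspec' : ∀ μ ∈ spectrum ℝ (mpow (M * A * M) (-1)), 1 ≤ μ := by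
    intro μ hμ
    rw [mpow_spectrum hXpd] at hμ
    obtain ⟨x, hx, rfl⟩ := hμ
    have hx0 : 0 < x := spec_pos hXpd x hx
    show (1:ℝ) ≤ x ^ ((-1):ℝ)
    rw [Real.rpow_neg_one]
    nlinarith [mul_inv_cancel₀ (ne_of_gt hx0), inv_pos.mpr hx0, hspec x hx]
  have h1 : Loewner 1 (mpow (M * A * M) (-1)) :=
    loewner_of_one_le_spectrum (mpow_isHermitian _ _) hspec'
  have hinv : mpow (M * A * M) (-1) = M⁻¹ * A⁻¹ * M⁻¹ := by
    rw [mpow_neg_one hXpd, Matrix.mul_inv_rev, Matrix.mul_inv_rev, mul_assoc]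
  have hMinv : M⁻¹ = mpow B (1/2 : ℝ) := by
    rw [hM, mpow_inv hB]; norm_num
  rw [hinv, hMinv] at h1
  have h2 := loewner_conj h1 M
  have e1 : M * 1 * Mᴴ = B⁻¹ := by
    rw [hMH, mul_one, hM, mpow_mul_mpow hB]
    norm_num
    exact mpow_neg_one hB
  have e2 : M * (mpow B (1/2:ℝ) * A⁻¹ * mpow B (1/2:ℝ)) * Mᴴ = A⁻¹ := by
    rw [hMH, hM]
    calc mpow B (-(1/2):ℝ) * (mpow B (1/2:ℝ) * A⁻¹ * mpow B (1/2:ℝ)) * mpow B (-(1/2):ℝ)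
        = (mpow B (-(1/2):ℝ) * mpow B (1/2:ℝ)) * A⁻¹ *
            (mpow B (1/2:ℝ) * mpow B (-(1/2):ℝ)) := by noncomm_ring
    _ = A⁻¹ := by rw [mpow_mul_mpow hB, mpow_mul_mpow hB]; norm_num; rw [mpow_zero hB, one_mul, mul_one]
  rw [e1, e2] at h2
  exact h2

end Helper

namespace Helper

open Matrix Filter

variable {A B X Y H P M N R S U V : Matrix n n ℂ}

lemma mpow_add' (hA : A.PosDef) (a b c : ℝ) (h : a + b = c) :
    mpow A a * mpow A b = mpow A c := by rw [mpow_mul_mpow hA, h]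

/-- The Loewner-Heinz property for exponent `u`. -/
def LHP (u : ℝ) : Prop := ∀ (A B : Matrix n n ℂ), A.PosDef → B.PosDef →
  Loewner A B → Loewner (mpow A u) (mpow B u)

lemma lh_zero : LHP (n := n) 0 := by
  intro A B hA hB _
  rw [mpow_zero hA, mpow_zero hB]
  exact loewner_refl 1

lemma lh_one : LHP (n := n) 1 := by
  intro A B hA hB h
  rwa [mpow_one hA, mpow_one hB]

lemma conj_form (hA : A.PosDef) (hB : B.PosDef) (u : ℝ) :
    (mpow A (u/2) * mpow B (-(u/2)))ᴴ * (mpow A (u/2) * mpow B (-(u/2)))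
      = mpow B (-(u/2)) * mpow A u * mpow B (-(u/2)) := by
  rw [Matrix.conjTranspose_mul, mpow_conjTranspose, mpow_conjTranspose]
  calc mpow B (-(u/2)) * mpow A (u/2) * (mpow A (u/2) * mpow B (-(u/2)))
      = mpow B (-(u/2)) * (mpow A (u/2) * mpow A (u/2)) * mpow B (-(u/2)) := by
        simp only [mul_assoc]
  _ = mpow B (-(u/2)) * mpow A u * mpow B (-(u/2)) := by
        rw [mpow_add' hA _ _ u (by ring)]

lemma norm_aux (hA : A.PosDef) (hB : B.PosDef) (u : ℝ)
    (h : Loewner (mpow A u) (mpow B u)) : ‖mpow A (u/2) * mpow B (-(u/2))‖ ≤ 1 := by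
  apply opNorm_le_one
  have hc := loewner_conj h (mpow B (-(u/2)))
  rw [mpow_conjTranspose] at hc
  have e1 : mpow B (-(u/2)) * mpow B u * mpow B (-(u/2)) = 1 := by
    rw [mpow_add' hB _ _ (u/2) (by ring), mpow_add' hB _ _ 0 (by ring), mpow_zero hB]
  rw [e1] at hc
  rw [conj_form hA hB u]
  exact hc

lemma lh_mid {r s : ℝ} (hr : LHP (n := n) r) (hs : LHP (n := n) s) :
    LHP (n := n) ((r + s)/2) := by
  intro A B hA hB hAB
  have nr := norm_aux hA hB r (hr A B hA hB hAB)
  have ns := norm_aux hA hB s (hs A B hA hB hAB)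
  set Q1 : Matrix n n ℂ := mpow B (-(s/2)) * mpow A (s/2) with hQ1
  set Q2 : Matrix n n ℂ := mpow A (r/2) * mpow B (-(r/2)) with hQ2
  have hQ1n : ‖Q1‖ ≤ 1 := by
    have : Q1 = (mpow A (s/2) * mpow B (-(s/2)))ᴴ := by
      rw [Matrix.conjTranspose_mul, mpow_conjTranspose, mpow_conjTranspose]
    rw [this, Matrix.l2_opNorm_conjTranspose]
    exact ns
  have hN : ‖Q1 * Q2‖ ≤ 1 := by
    calc ‖Q1 * Q2‖ ≤ ‖Q1‖ * ‖Q2‖ := Matrix.l2_opNorm_mul Q1 Q2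
    _ ≤ 1 * 1 := mul_le_mul hQ1n nr (norm_nonneg _) zero_le_one
    _ = 1 := by norm_num
  -- the Hermitian matrix H
  set K : Matrix n n ℂ := mpow A ((r+s)/4) * mpow B (-((r+s)/4)) with hK
  have hHpsd : (mpow B (-((r+s)/4)) * mpow A ((r+s)/2) * mpow B (-((r+s)/4))).PosSemidef := by
    have := Matrix.posSemidef_conjTranspose_mul_self K
    rw [hK] at this
    have e := conj_form hA hB ((r+s)/2)
    rw [show ((r+s)/2/2 : ℝ) = (r+s)/4 by ring] at e
    rwa [e] at this
  have hSR : mpow B ((r-s)/4) * mpow B ((s-r)/4) = 1 := by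
    rw [mpow_add' hB _ _ 0 (by ring), mpow_zero hB]
  have hsim : mpow B (-((r+s)/4)) * mpow A ((r+s)/2) * mpow B (-((r+s)/4))
      = mpow B ((s-r)/4) * (Q1 * Q2) * mpow B ((r-s)/4) := by
    rw [hQ1, hQ2]
    have hassoc : mpow B ((s-r)/4) * (mpow B (-(s/2)) * mpow A (s/2) *
          (mpow A (r/2) * mpow B (-(r/2)))) * mpow B ((r-s)/4)
        = (mpow B ((s-r)/4) * mpow B (-(s/2))) * (mpow A (s/2) * mpow A (r/2)) *
          (mpow B (-(r/2)) * mpow B ((r-s)/4)) := by noncomm_ring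
    rw [hassoc, mpow_add' hB ((s-r)/4) (-(s/2)) (-((r+s)/4)) (by ring),
      mpow_add' hA (s/2) (r/2) ((r+s)/2) (by ring),
      mpow_add' hB (-(r/2)) ((r-s)/4) (-((r+s)/4)) (by ring)]
  have hspec := spectrum_le_one_of_similar hHpsd.isHermitian hSR hsim hN
  have hH1 := loewner_one_of_spectrum_le hHpsd.isHermitian hspec
  -- conjugate back
  have hc := loewner_conj hH1 (mpow B ((r+s)/4))
  rw [mpow_conjTranspose, mul_one] at hc
  have e1 : mpow B ((r+s)/4) * mpow B ((r+s)/4) = mpow B ((r+s)/2) :=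
    mpow_add' hB _ _ _ (by ring)
  rw [e1] at hc
  have e2 : mpow B ((r+s)/4) * (mpow B (-((r+s)/4)) * mpow A ((r+s)/2) * mpow B (-((r+s)/4)))
      * mpow B ((r+s)/4) = mpow A ((r+s)/2) := by
    simp only [← mul_assoc]
    rw [mpow_add' hB ((r+s)/4) (-((r+s)/4)) 0 (by ring), mpow_zero hB, one_mul]
    simp only [mul_assoc]
    rw [mpow_add' hB (-((r+s)/4)) ((r+s)/4) 0 (by ring), mpow_zero hB, mul_one]
  rw [e2] at hc
  exact hc

lemma lh_dyadic : ∀ k : ℕ, ∀ j : ℕ, j ≤ 2^k → LHP (n := n) ((j : ℝ) / 2^k) := by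
  intro k
  induction k with
  | zero =>
    intro j hj
    interval_cases j
    · rw [show ((0:ℕ):ℝ)/2^(0:ℕ) = (0:ℝ) by norm_num]
      exact lh_zero
    · rw [show ((1:ℕ):ℝ)/2^(0:ℕ) = (1:ℝ) by norm_num]
      exact lh_one
  | succ k ih =>
    intro j hj
    rcases Nat.even_or_odd j with ⟨m, rfl⟩ | ⟨m, rfl⟩
    · have hm : m ≤ 2^k := by
        have : (2:ℕ)^(k+1) = 2 * 2^k := by ring
        omega
      have := ih m hm
      have he : ((m + m : ℕ) : ℝ) / 2^(k+1) = (m : ℝ) / 2^k := by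
        push_cast
        rw [pow_succ]
        field_simp
        ring
      rwa [he]
    · have hm : m + 1 ≤ 2^k := by
        have : (2:ℕ)^(k+1) = 2 * 2^k := by ring
        omega
      have h1 := ih m (le_trans (Nat.le_succ m) hm)
      have h2 := ih (m+1) hm
      have := lh_mid h1 h2
      have he : (((m : ℝ)/2^k) + ((m+1 : ℕ) : ℝ)/2^k)/2 = ((2*m+1 : ℕ) : ℝ) / 2^(k+1) := by
        push_cast
        rw [pow_succ]
        field_simp
        ring
      rwa [he] at this

lemma quad_diag (U : Matrix n n ℂ) (d : n → ℂ) (x : n → ℂ) :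
    dotProduct (star x) ((U * Matrix.diagonal d * star U) *ᵥ x)
      = ∑ i, d i * ((Matrix.vecMul (star x) U) i * ((star U *ᵥ x) i)) := by
  rw [← Matrix.mulVec_mulVec, ← Matrix.mulVec_mulVec, Matrix.dotProduct_mulVec]
  unfold dotProduct
  apply Finset.sum_congr rfl
  intro i _
  rw [Matrix.mulVec_diagonal]
  ring

lemma tendsto_quad (hA : A.IsHermitian) (f : ℕ → ℝ → ℝ) (g : ℝ → ℝ)
    (hconv : ∀ μ ∈ spectrum ℝ A, Tendsto (fun k => f k μ) atTop (nhds (g μ)))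
    (x : n → ℂ) :
    Tendsto (fun k => dotProduct (star x) (cfc (f k) A *ᵥ x)) atTop
      (nhds (dotProduct (star x) (cfc g A *ᵥ x))) := by
  have hrw : ∀ h : ℝ → ℝ, dotProduct (star x) (cfc h A *ᵥ x) =
      ∑ i, (RCLike.ofReal (K := ℂ) (h (hA.eigenvalues i))) *
        ((Matrix.vecMul (star x) (hA.eigenvectorUnitary : Matrix n n ℂ)) i *
          ((star (hA.eigenvectorUnitary : Matrix n n ℂ) *ᵥ x) i)) := by
    intro h
    rw [hA.cfc_eq, Matrix.IsHermitian.cfc, Unitary.conjStarAlgAut_apply, quad_diag]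
    simp only [Function.comp_apply]
  simp only [hrw]
  apply tendsto_finset_sum
  intro i _
  apply Filter.Tendsto.mul_const
  exact (RCLike.continuous_ofReal.tendsto _).comp
    (hconv (hA.eigenvalues i) (hA.eigenvalues_mem_spectrum_real i))

lemma loewner_limit (hA : A.PosDef) (hB : B.PosDef) (s : ℕ → ℝ) (t : ℝ)
    (hconv : Tendsto s atTop (nhds t))
    (hk : ∀ k, Loewner (mpow A (s k)) (mpow B (s k))) : Loewner (mpow A t) (mpow B t) := by
  apply posSemidef_of_re_quad
  · exact ((mpow_isSelfAdjoint B t).sub (mpow_isSelfAdjoint A t) : IsSelfAdjoint _)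
  intro x
  have hconvA : ∀ μ ∈ spectrum ℝ A, Tendsto (fun k => μ ^ (s k)) atTop (nhds (μ ^ t)) := by
    intro μ hμ
    have hμ0 : 0 < μ := spec_pos hA μ hμ
    simp only [Real.rpow_def_of_pos hμ0]
    exact (Real.continuous_exp.tendsto _).comp ((continuous_const.mul continuous_id).tendsto t |>.comp hconv)
  have hconvB : ∀ μ ∈ spectrum ℝ B, Tendsto (fun k => μ ^ (s k)) atTop (nhds (μ ^ t)) := by
    intro μ hμ
    have hμ0 : 0 < μ := spec_pos hB μ hμ
    simp only [Real.rpow_def_of_pos hμ0]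
    exact (Real.continuous_exp.tendsto _).comp ((continuous_const.mul continuous_id).tendsto t |>.comp hconv)
  have tA := tendsto_quad hA.isHermitian (fun k μ => μ ^ (s k)) (fun μ => μ ^ t) hconvA x
  have tB := tendsto_quad hB.isHermitian (fun k μ => μ ^ (s k)) (fun μ => μ ^ t) hconvB x
  have tre : Tendsto (fun k => (dotProduct (star x) (mpow B (s k) *ᵥ x)
        - dotProduct (star x) (mpow A (s k) *ᵥ x)).re) atTop
      (nhds ((dotProduct (star x) (mpow B t *ᵥ x)
        - dotProduct (star x) (mpow A t *ᵥ x)).re)) :=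
    (Complex.continuous_re.tendsto _).comp (tB.sub tA)
  have hre : 0 ≤ (dotProduct (star x) (mpow B t *ᵥ x)
      - dotProduct (star x) (mpow A t *ᵥ x)).re := by
    refine ge_of_tendsto tre ?_
    refine Filter.Eventually.of_forall fun k => ?_
    have hq := (hk k).dotProduct_mulVec_nonneg x
    rw [Matrix.sub_mulVec, dotProduct_sub] at hq
    have := (Complex.le_def.mp hq).1
    simpa using this
  have heq : RCLike.re (dotProduct (star x) ((mpow B t - mpow A t) *ᵥ x))
      = (dotProduct (star x) (mpow B t *ᵥ x)
        - dotProduct (star x) (mpow A t *ᵥ x)).re := by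
    rw [Matrix.sub_mulVec, dotProduct_sub, RCLike.re_to_complex]
  rw [heq]
  exact hre

lemma lh {u : ℝ} (hu : u ∈ Set.Icc (0:ℝ) 1) : LHP (n := n) u := by
  intro A B hA hB hAB
  set s : ℕ → ℝ := fun k => (Nat.floor (u * 2^k) : ℝ) / 2^k with hsdef
  have hsk : ∀ k, LHP (n := n) (s k) := by
    intro k
    apply lh_dyadic k
    have h2k : (0:ℝ) < 2^k := by positivity
    have : u * 2^k ≤ ((2^k : ℕ) : ℝ) := by
      push_cast
      nlinarith [hu.2, h2k]
    calc Nat.floor (u * 2^k) ≤ Nat.floor ((2^k : ℕ) : ℝ) := Nat.floor_le_floor this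
    _ = 2^k := Nat.floor_natCast _
  have hconv : Tendsto s atTop (nhds u) := by
    have hlow : ∀ k, u - 1/2^k ≤ s k := by
      intro k
      have h2k : (0:ℝ) < 2^k := by positivity
      have := Nat.lt_floor_add_one (u * 2^k)
      show u - 1/2^k ≤ ((Nat.floor (u * 2^k) : ℝ)) / 2^k
      rw [sub_le_iff_le_add, ← add_div, le_div_iff₀ h2k]
      linarith
    have hhigh : ∀ k, s k ≤ u := by
      intro k
      have h2k : (0:ℝ) < 2^k := by positivity
      have h0 : 0 ≤ u * 2^k := by nlinarith [hu.1]
      have := Nat.floor_le h0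
      show ((Nat.floor (u * 2^k) : ℝ)) / 2^k ≤ u
      rw [div_le_iff₀ h2k]
      linarith
    have hlim : Tendsto (fun k : ℕ => u - 1/2^k) atTop (nhds u) := by
      have : Tendsto (fun k : ℕ => (1:ℝ)/2^k) atTop (nhds 0) := by
        simp only [one_div, ← inv_pow]
        exact tendsto_pow_atTop_nhds_zero_of_lt_one (by norm_num) (by norm_num)
      have := (tendsto_const_nhds (x := u)).sub this
      simpa using this
    exact tendsto_of_tendsto_of_tendsto_of_le_of_le hlim tendsto_const_nhds hlow hhigh
  exact loewner_limit hA hB s u hconv (fun k => hsk k A B hA hB hAB)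

end Helper

namespace Helper

open Matrix

variable {A B C D T X Y M W : Matrix n n ℂ}

lemma lh_neg {u : ℝ} (hu : u ∈ Set.Icc (0:ℝ) 1) (hX : X.PosDef) (hY : Y.PosDef)
    (h : Loewner X Y) : Loewner (mpow Y (-u)) (mpow X (-u)) := by
  have h1 := lh hu X Y hX hY h
  have h2 := loewner_inv (mpow_posDef hX u) (mpow_posDef hY u) h1
  rwa [mpow_inv hX u, mpow_inv hY u] at h2

lemma furuta (hT : T.PosDef) (hD : D.PosDef) (hDT : Loewner D T) {r q : ℝ}
    (hr : r ∈ Set.Icc (0:ℝ) 1) (hq : 1 ≤ q) :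
    Loewner (mpow (mpow T (r/2) * mpow D q * mpow T (r/2)) ((1+r)/(q+r)))
      (mpow T (1+r)) := by
  have hqr0 : (0:ℝ) < q + r := by linarith [hr.1]
  set s : ℝ := (1+r)/(q+r) with hs
  set M : Matrix n n ℂ := mpow T (r/2) * mpow D (q/2) with hM
  have hMu : IsUnit M := (isUnit_mpow hT _).mul (isUnit_mpow hD _)
  have hMH : Mᴴ = mpow D (q/2) * mpow T (r/2) := by
    rw [hM, Matrix.conjTranspose_mul, mpow_conjTranspose, mpow_conjTranspose]
  have hMM : M * Mᴴ = mpow T (r/2) * mpow D q * mpow T (r/2) := by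
    rw [hM, hMH]
    calc mpow T (r/2) * mpow D (q/2) * (mpow D (q/2) * mpow T (r/2))
        = mpow T (r/2) * (mpow D (q/2) * mpow D (q/2)) * mpow T (r/2) := by noncomm_ring
    _ = mpow T (r/2) * mpow D q * mpow T (r/2) := by rw [mpow_add' hD _ _ q (by ring)]
  have hMtM : Mᴴ * M = mpow D (q/2) * mpow T r * mpow D (q/2) := by
    rw [hM, hMH]
    calc mpow D (q/2) * mpow T (r/2) * (mpow T (r/2) * mpow D (q/2))
        = mpow D (q/2) * (mpow T (r/2) * mpow T (r/2)) * mpow D (q/2) := by noncomm_ring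
    _ = mpow D (q/2) * mpow T r * mpow D (q/2) := by rw [mpow_add' hT _ _ r (by ring)]
  have hMtMpd : (Mᴴ * M).PosDef := posDef_conjTranspose_mul_self hMu
  -- bound1 : D^(q+r) ≤ Mᴴ M
  have hb1 : Loewner (mpow D (q+r)) (Mᴴ * M) := by
    have hlh := lh hr D T hD hT hDT
    have hc := loewner_conj hlh (mpow D (q/2))
    rw [mpow_conjTranspose] at hc
    have e1 : mpow D (q/2) * mpow D r * mpow D (q/2) = mpow D (q+r) := by
      rw [mpow_add' hD _ _ (q/2 + r) (by ring), mpow_add' hD _ _ (q+r) (by ring)]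
    rw [e1, ← hMtM] at hc
    exact hc
  -- negative power antitone
  have hu1 : 1 - s ∈ Set.Icc (0:ℝ) 1 := by
    constructor
    · have : s ≤ 1 := by rw [hs, div_le_one hqr0]; linarith
      linarith
    · have : 0 ≤ s := div_nonneg (by linarith [hr.1]) hqr0.le
      linarith
  have hb2 := lh_neg hu1 (mpow_posDef hD (q+r)) hMtMpd hb1
  rw [show -(1-s) = s - 1 by ring] at hb2
  have e2 : mpow (mpow D (q+r)) (s-1) = mpow D (1-q) := by
    rw [mpow_mpow hD]
    congr 1
    rw [hs]
    field_simp
    ring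
  rw [e2] at hb2
  -- conjugate by M
  have hc2 := loewner_conj hb2 M
  have e3 : M * mpow D (1-q) * Mᴴ = mpow T (r/2) * mpow D 1 * mpow T (r/2) := by
    rw [hM, hMH]
    calc mpow T (r/2) * mpow D (q/2) * mpow D (1-q) * (mpow D (q/2) * mpow T (r/2))
        = mpow T (r/2) * ((mpow D (q/2) * mpow D (1-q)) * mpow D (q/2)) * mpow T (r/2) := by
          noncomm_ring
    _ = mpow T (r/2) * mpow D 1 * mpow T (r/2) := by
          rw [mpow_add' hD _ _ (1 - q/2) (by ring), mpow_add' hD _ _ 1 (by ring)]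
  have hshift : mpow (M * Mᴴ) s = M * mpow (Mᴴ * M) (s-1) * Mᴴ := mpow_conj_shift hMu s
  have hstep1 : Loewner (mpow (M * Mᴴ) s) (mpow T (r/2) * mpow D 1 * mpow T (r/2)) := by
    rw [hshift, ← e3]
    exact hc2
  -- final bound
  have hstep2 : Loewner (mpow T (r/2) * mpow D 1 * mpow T (r/2)) (mpow T (1+r)) := by
    have hc3 := loewner_conj hDT (mpow T (r/2))
    rw [mpow_conjTranspose] at hc3
    have e4 : mpow T (r/2) * T * mpow T (r/2) = mpow T (1+r) := by
      nth_rewrite 2 [← mpow_one hT]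
      rw [mpow_add' hT _ _ (r/2 + 1) (by ring), mpow_add' hT _ _ (1+r) (by ring)]
    rw [e4] at hc3
    rw [mpow_one hD]
    exact hc3
  have := loewner_trans hstep1 hstep2
  rwa [hMM] at this

end Helper

namespace Helper

open Matrix

variable {A B X Y : Matrix n n ℂ}

lemma ah_step (hA : A.PosDef) (hB : B.PosDef) {p : ℝ} (hp1 : 1 ≤ p) (hp2 : p ≤ 2)
    (h : Loewner (geo A B) 1) : Loewner (geo (mpow A p) (mpow B p)) 1 := by
  set C : Matrix n n ℂ := mpow A (-(1/2)) * B * mpow A (-(1/2)) with hC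
  have hCpd : C.PosDef := by
    have := posDef_conj hB (isUnit_mpow hA (-(1/2)))
    rwa [mpow_conjTranspose] at this
  set D : Matrix n n ℂ := mpow C (1/2) with hD
  have hDpd : D.PosDef := mpow_posDef hCpd _
  have hDH : Dᴴ = D := mpow_conjTranspose C _
  have hgeoAB : geo A B = mpow A (1/2) * D * mpow A (1/2) := by
    simp only [geo, ← hC, ← hD]
  have hApd' : (mpow A (-1)).PosDef := mpow_posDef hA _
  -- h1 : D ≤ A⁻¹ (as mpow A (-1))
  have h1 : Loewner D (mpow A (-1)) := by
    have hc := loewner_conj h (mpow A (-(1/2)))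
    rw [mpow_conjTranspose, mul_one, hgeoAB] at hc
    have e1 : mpow A (-(1/2)) * (mpow A (1/2) * D * mpow A (1/2)) * mpow A (-(1/2)) = D := by
      calc mpow A (-(1/2)) * (mpow A (1/2) * D * mpow A (1/2)) * mpow A (-(1/2))
          = (mpow A (-(1/2)) * mpow A (1/2)) * D * (mpow A (1/2) * mpow A (-(1/2))) := by
            noncomm_ring
      _ = D := by
            rw [mpow_add' hA (-(1/2)) (1/2) 0 (by ring), mpow_add' hA (1/2) (-(1/2)) 0 (by ring),
              mpow_zero hA, one_mul, mul_one]
    have e2 : mpow A (-(1/2)) * mpow A (-(1/2)) = mpow A (-1) :=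
      mpow_add' hA _ _ _ (by ring)
    rw [e1, e2] at hc
    exact hc
  -- h2 : A ≤ D⁻¹ = mpow C (-(1/2))
  have h2 : Loewner A (mpow C (-(1/2))) := by
    have := loewner_inv hDpd hApd' h1
    rw [mpow_inv hA, mpow_inv hCpd, show -(-1:ℝ) = 1 by ring, mpow_one hA] at this
    exact this
  have hDAD : Loewner (D * A * D) D := by
    have hc := loewner_conj h2 D
    rw [hDH] at hc
    have e : D * mpow C (-(1/2)) * D = D := by
      rw [hD, mpow_add' hCpd _ _ 0 (by ring), mpow_zero hCpd, one_mul]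
    rw [e] at hc
    exact hc
  have hDADpd : (D * A * D).PosDef := by
    have := posDef_conj hA hDpd.isUnit
    rwa [hDH] at this
  have hε01 : p - 1 ∈ Set.Icc (0:ℝ) 1 := ⟨by linarith, by linarith⟩
  have hLHe := lh hε01 _ _ hDADpd hDpd hDAD
  -- decomposition of B
  set Mb : Matrix n n ℂ := mpow A (1/2) * D with hMb
  have hMbu : IsUnit Mb := (isUnit_mpow hA _).mul hDpd.isUnit
  have hMbH : Mbᴴ = D * mpow A (1/2) := by
    rw [hMb, Matrix.conjTranspose_mul, hDH, mpow_conjTranspose]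
  have hMbMb : Mb * Mbᴴ = B := by
    rw [hMb, hMbH]
    calc mpow A (1/2) * D * (D * mpow A (1/2))
        = mpow A (1/2) * (D * D) * mpow A (1/2) := by noncomm_ring
    _ = mpow A (1/2) * C * mpow A (1/2) := by
        rw [hD, mpow_add' hCpd _ _ 1 (by ring), mpow_one hCpd]
    _ = B := by
        rw [hC]
        calc mpow A (1/2) * (mpow A (-(1/2)) * B * mpow A (-(1/2))) * mpow A (1/2)
            = (mpow A (1/2) * mpow A (-(1/2))) * B * (mpow A (-(1/2)) * mpow A (1/2)) := by
              noncomm_ring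
        _ = B := by
              rw [mpow_add' hA (1/2) (-(1/2)) 0 (by ring),
                mpow_add' hA (-(1/2)) (1/2) 0 (by ring), mpow_zero hA, one_mul, mul_one]
  have hMbtMb : Mbᴴ * Mb = D * A * D := by
    rw [hMb, hMbH]
    calc D * mpow A (1/2) * (mpow A (1/2) * D)
        = D * (mpow A (1/2) * mpow A (1/2)) * D := by noncomm_ring
    _ = D * A * D := by rw [mpow_add' hA _ _ 1 (by ring), mpow_one hA]
  have hBp : mpow B p = Mb * mpow (D * A * D) (p-1) * Mbᴴ := by
    rw [← hMbMb, mpow_conj_shift hMbu p, hMbtMb]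
  -- W
  set W : Matrix n n ℂ := mpow A (-((p-1)/2)) * D with hW
  have hWu : IsUnit W := (isUnit_mpow hA _).mul hDpd.isUnit
  have hWH : Wᴴ = D * mpow A (-((p-1)/2)) := by
    rw [hW, Matrix.conjTranspose_mul, hDH, mpow_conjTranspose]
  have hXp : mpow A (-(p/2)) * mpow B p * mpow A (-(p/2))
      = W * mpow (D*A*D) (p-1) * Wᴴ := by
    rw [hBp, hW, hWH, hMb, hMbH]
    calc mpow A (-(p/2)) * (mpow A (1/2) * D * mpow (D*A*D) (p-1) * (D * mpow A (1/2)))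
          * mpow A (-(p/2))
        = ((mpow A (-(p/2)) * mpow A (1/2)) * D) * mpow (D*A*D) (p-1) *
            (D * (mpow A (1/2) * mpow A (-(p/2)))) := by noncomm_ring
    _ = (mpow A (-((p-1)/2)) * D) * mpow (D*A*D) (p-1) * (D * mpow A (-((p-1)/2))) := by
        rw [mpow_add' hA (-(p/2)) (1/2) (-((p-1)/2)) (by ring),
          mpow_add' hA (1/2) (-(p/2)) (-((p-1)/2)) (by ring)]
  have hXple : Loewner (W * mpow (D*A*D) (p-1) * Wᴴ) (W * mpow D (p-1) * Wᴴ) :=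
    loewner_conj hLHe W
  have hXppd : (W * mpow (D*A*D) (p-1) * Wᴴ).PosDef :=
    posDef_conj (mpow_posDef hDADpd _) hWu
  have hYpd : (W * mpow D (p-1) * Wᴴ).PosDef := posDef_conj (mpow_posDef hDpd _) hWu
  have hhalf : (1/2 : ℝ) ∈ Set.Icc (0:ℝ) 1 := by norm_num
  have hsq := lh hhalf _ _ hXppd hYpd hXple
  -- rewrite Y
  have hY : W * mpow D (p-1) * Wᴴ
      = mpow A (-((p-1)/2)) * mpow C ((p+1)/2) * mpow A (-((p-1)/2)) := by
    rw [hW, hWH, hD, mpow_mpow hCpd]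
    calc mpow A (-((p-1)/2)) * mpow C (1/2) * mpow C (1/2 * (p-1)) *
          (mpow C (1/2) * mpow A (-((p-1)/2)))
        = mpow A (-((p-1)/2)) * ((mpow C (1/2) * mpow C (1/2*(p-1))) * mpow C (1/2)) *
            mpow A (-((p-1)/2)) := by noncomm_ring
    _ = mpow A (-((p-1)/2)) * mpow C ((p+1)/2) * mpow A (-((p-1)/2)) := by
        rw [mpow_add' hCpd _ _ (p/2) (by ring), mpow_add' hCpd _ _ ((p+1)/2) (by ring)]
  -- Furuta
  have hp0 : (0:ℝ) < p := by linarith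
  have hFur := furuta hApd' hDpd h1 (r := p-1) (q := p+1)
    ⟨by linarith, by linarith⟩ (by linarith)
  have eT1 : mpow (mpow A (-1)) ((p-1)/2) = mpow A (-((p-1)/2)) := by
    rw [mpow_mpow hA]; congr 1; ring
  have eD1 : mpow D (p+1) = mpow C ((p+1)/2) := by
    rw [hD, mpow_mpow hCpd]; congr 1; ring
  have eexp : (1+(p-1))/((p+1)+(p-1)) = (1/2 : ℝ) := by
    rw [show (1+(p-1)) = p by ring, show ((p+1)+(p-1)) = 2*p by ring]
    field_simp
  have eT2 : mpow (mpow A (-1)) (1+(p-1)) = mpow A (-p) := by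
    rw [mpow_mpow hA]; congr 1; ring
  rw [eT1, eD1, eexp, eT2, ← hY] at hFur
  -- chain
  have hchain := loewner_trans hsq hFur
  -- final conjugation
  have hc := loewner_conj hchain (mpow A (p/2))
  rw [mpow_conjTranspose] at hc
  have eR : mpow A (p/2) * mpow A (-p) * mpow A (p/2) = 1 := by
    rw [mpow_add' hA _ _ (-(p/2)) (by ring), mpow_add' hA _ _ 0 (by ring), mpow_zero hA]
  rw [eR] at hc
  have hgeo : geo (mpow A p) (mpow B p)
      = mpow A (p/2) * mpow (W * mpow (D*A*D) (p-1) * Wᴴ) (1/2) * mpow A (p/2) := by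
    simp only [geo]
    rw [mpow_mpow hA p (1/2), mpow_mpow hA p (-(1/2)),
      show p * (1/2) = p/2 by ring, show p * (-(1/2)) = -(p/2) by ring, hXp]
  rw [hgeo]
  exact hc

lemma ah_iter : ∀ k : ℕ, ∀ p : ℝ, 1 ≤ p → p ≤ 2^k →
    ∀ A B : Matrix n n ℂ, A.PosDef → B.PosDef → Loewner (geo A B) 1 →
    Loewner (geo (mpow A p) (mpow B p)) 1 := by
  intro k
  induction k with
  | zero =>
    intro p hp1 hp2 A B hA hB h
    have hp : p = 1 := le_antisymm (by simpa using hp2) hp1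
    subst hp
    rwa [mpow_one hA, mpow_one hB]
  | succ k ih =>
    intro p hp1 hp2 A B hA hB h
    by_cases hle : p ≤ 2
    · exact ah_step hA hB hp1 hle h
    · push_neg at hle
      have hq1 : 1 ≤ p/2 := by linarith
      have hq2 : p/2 ≤ 2^k := by
        rw [pow_succ] at hp2
        linarith
      have hgq := ih (p/2) hq1 hq2 A B hA hB h
      have hstep := ah_step (mpow_posDef hA (p/2)) (mpow_posDef hB (p/2))
        (p := 2) one_le_two le_rfl hgq
      rw [mpow_mpow hA, mpow_mpow hB, show p/2*2 = p by ring] at hstep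
      exact hstep

end Helper


open Matrix

/-- if `A⁻¹ ♮ₜ B ≤ A⁻¹` for some `t ∈ (0,1]`, then
`A^p # B^p ≤ I` for all `p ≥ 1`. -/
theorem stmt16 (A B : Matrix n n ℂ) (hA : A.PosDef) (hB : B.PosDef)
    {t : ℝ} (ht : t ∈ Set.Ioc (0:ℝ) 1) (h : Loewner (sgeo t A⁻¹ B) A⁻¹) :
    ∀ p : ℝ, 1 ≤ p → Loewner (geo (mpow A p) (mpow B p)) 1 := by
  intro p hp
  have hAA : A⁻¹⁻¹ = A :=
    Matrix.nonsing_inv_nonsing_inv A ((Matrix.isUnit_iff_isUnit_det A).mp hA.isUnit)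
  unfold sgeo at h
  rw [hAA] at h
  set C : Matrix n n ℂ := mpow A (-(1/2)) * B * mpow A (-(1/2)) with hC
  have hCpd : C.PosDef := by
    have := Helper.posDef_conj hB (Helper.isUnit_mpow hA (-(1/2)))
    rwa [Helper.mpow_conjTranspose] at this
  have hGpd : (geo A B).PosDef := by
    simp only [geo, ← hC]
    have := Helper.posDef_conj (Helper.mpow_posDef hCpd (1/2)) (Helper.isUnit_mpow hA (1/2))
    rwa [Helper.mpow_conjTranspose] at this
  set G : Matrix n n ℂ := geo A B with hG
  rw [← Helper.mpow_neg_one hA] at h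
  have hc := Helper.loewner_conj h (mpow A (1/2))
  rw [Helper.mpow_conjTranspose] at hc
  have eR : mpow A (1/2) * mpow A (-1) * mpow A (1/2) = 1 := by
    rw [Helper.mpow_add' hA _ _ (-(1/2)) (by ring),
      Helper.mpow_add' hA _ _ 0 (by ring), Helper.mpow_zero hA]
  rw [eR] at hc
  set Nmat : Matrix n n ℂ := mpow A (-(1/2)) * mpow G t * mpow A (1/2) with hN
  have hNH : Nmatᴴ = mpow A (1/2) * mpow G t * mpow A (-(1/2)) := by
    rw [hN, Matrix.conjTranspose_mul, Matrix.conjTranspose_mul,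
      Helper.mpow_conjTranspose, Helper.mpow_conjTranspose, Helper.mpow_conjTranspose]
    noncomm_ring
  have eL : Nmatᴴ * Nmat = mpow A (1/2) * (mpow G t * mpow A (-1) * mpow G t) * mpow A (1/2) := by
    rw [hNH, hN]
    calc mpow A (1/2) * mpow G t * mpow A (-(1/2)) * (mpow A (-(1/2)) * mpow G t * mpow A (1/2))
        = mpow A (1/2) * (mpow G t * (mpow A (-(1/2)) * mpow A (-(1/2))) * mpow G t) *
            mpow A (1/2) := by noncomm_ring
    _ = mpow A (1/2) * (mpow G t * mpow A (-1) * mpow G t) * mpow A (1/2) := by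
        rw [Helper.mpow_add' hA _ _ (-1) (by ring)]
  rw [← eL] at hc
  have hNorm := Helper.opNorm_le_one Nmat hc
  have hSR : mpow A (-(1/2)) * mpow A (1/2) = 1 := by
    rw [Helper.mpow_add' hA _ _ 0 (by ring), Helper.mpow_zero hA]
  have hsim : mpow G t = mpow A (1/2) * Nmat * mpow A (-(1/2)) := by
    rw [hN]
    calc mpow G t = (mpow A (1/2) * mpow A (-(1/2))) * mpow G t *
          (mpow A (1/2) * mpow A (-(1/2))) := by
          rw [Helper.mpow_add' hA (1/2) (-(1/2)) 0 (by ring), Helper.mpow_zero hA,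
            one_mul, mul_one]
    _ = mpow A (1/2) * (mpow A (-(1/2)) * mpow G t * mpow A (1/2)) * mpow A (-(1/2)) := by
          noncomm_ring
  have hspecT := Helper.spectrum_le_one_of_similar (Helper.mpow_isHermitian G t)
    hSR hsim hNorm
  have hspecG : ∀ μ ∈ spectrum ℝ G, μ ≤ 1 := by
    intro μ hμ
    have hμt : μ ^ t ≤ 1 := hspecT _ (by
      rw [Helper.mpow_spectrum hGpd t]
      exact ⟨μ, hμ, rfl⟩)
    by_contra hcon
    push_neg at hcon
    have := (Real.one_lt_rpow_iff_of_pos (Helper.spec_pos hGpd μ hμ)).mpr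
      (Or.inl ⟨hcon, ht.1⟩)
    linarith
  have hG1 : Loewner G 1 := Helper.loewner_one_of_spectrum_le hGpd.isHermitian hspecG
  obtain ⟨k, hk⟩ := exists_nat_gt p
  have hk2 : p ≤ (2:ℝ)^k := by
    have h1 : (k:ℝ) ≤ (2:ℝ)^k := by
      have := k.lt_two_pow_self
      exact_mod_cast this.le
    linarith
  exact Helper.ah_iter k p hp hk2 A B hA hB hG1
end

section
/- Let A, B be 2×2 positive definite Hermitian matrices with det A = det B = 1 (operator norm ‖·‖). Then ‖A + B‖ ≤ √(det(A+B) · ‖A‖ · ‖B‖). -/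
open scoped Matrix.Norms.L2Operator ComplexOrder

variable {n : Type*} [Fintype n] [DecidableEq n]

section StmtAux
open Matrix

lemma aux_psd (A : Matrix n n ℂ) (hA : A.IsHermitian) {c : ℝ}
    (h : ∀ i, c ≤ hA.eigenvalues i) : (A - (c : ℂ) • 1).PosSemidef := by
  have hU : (hA.eigenvectorUnitary : Matrix n n ℂ) * star (hA.eigenvectorUnitary : Matrix n n ℂ) = 1 :=
    Matrix.mem_unitaryGroup_iff.mp hA.eigenvectorUnitary.2
  have hsm : (hA.eigenvectorUnitary : Matrix n n ℂ) * ((c : ℂ) • 1) *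
      star (hA.eigenvectorUnitary : Matrix n n ℂ) = (c : ℂ) • 1 := by
    rw [Matrix.mul_smul, Matrix.mul_one, Matrix.smul_mul, hU]
  have hdiag : diagonal (fun i => ((hA.eigenvalues i - c : ℝ) : ℂ)) =
      diagonal ((↑) ∘ hA.eigenvalues) - (c : ℂ) • 1 := by
    ext i j
    by_cases hij : i = j <;>
      simp [diagonal, hij, Matrix.one_apply, Matrix.sub_apply, Matrix.smul_apply]
  have key : A - (c : ℂ) • 1 =
      (hA.eigenvectorUnitary : Matrix n n ℂ) *
        diagonal (fun i => ((hA.eigenvalues i - c : ℝ) : ℂ)) *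
        (hA.eigenvectorUnitary : Matrix n n ℂ)ᴴ := by
    rw [← Matrix.star_eq_conjTranspose, hdiag, Matrix.mul_sub, Matrix.sub_mul, hsm]
    congr 1
    simpa using hA.spectral_theorem
  rw [key]
  exact (PosSemidef.diagonal
    (fun i => by simpa using sub_nonneg.mpr (h i))).mul_mul_conjTranspose_same _

lemma aux_qf (A : Matrix n n ℂ) (hA : A.IsHermitian) {c : ℝ}
    (h : ∀ i, c ≤ hA.eigenvalues i) (v : n → ℂ) :
    c * (star v ⬝ᵥ v).re ≤ (star v ⬝ᵥ (A *ᵥ v)).re := by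
  have := (aux_psd A hA h).re_dotProduct_nonneg v
  rw [Matrix.sub_mulVec, Matrix.smul_mulVec, Matrix.one_mulVec, dotProduct_sub,
    dotProduct_smul] at this
  simp only [map_sub, smul_eq_mul, Complex.re_ofReal_mul, RCLike.re_to_complex] at this
  linarith

noncomputable instance : CStarAlgebra (Matrix n n ℂ) := Matrix.instCStarAlgebra

lemma aux_norm_eq_eig [Nonempty n] (A : Matrix n n ℂ) (hA : A.PosDef) :
    ∃ i, ‖A‖ = hA.1.eigenvalues i := by
  have hsa : IsSelfAdjoint A := hA.1
  have := CStarAlgebra.norm_or_neg_norm_mem_spectrum (a := A) hsa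
  rw [Matrix.IsHermitian.spectrum_real_eq_range_eigenvalues hA.1] at this
  rcases this with ⟨i, hi⟩ | ⟨i, hi⟩
  · exact ⟨i, hi.symm⟩
  · exact absurd (hi ▸ hA.eigenvalues_pos i) (by simp [norm_nonneg])

lemma aux_eig_le_norm [Nonempty n] (A : Matrix n n ℂ) (hA : A.IsHermitian) (i : n) :
    hA.eigenvalues i ≤ ‖A‖ :=
  (le_abs_self _).trans (by
    simpa using spectrum.norm_le_norm_of_mem (hA.eigenvalues_mem_spectrum_real i))

lemma aux_unit (M : Matrix n n ℂ) (hM : M.IsHermitian) (j : n) :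
    (star ⇑(hM.eigenvectorBasis j) ⬝ᵥ ⇑(hM.eigenvectorBasis j)).re = 1 := by
  have h1 : (inner (𝕜 := ℂ) (hM.eigenvectorBasis j) (hM.eigenvectorBasis j)) = 1 := by
    rw [inner_self_eq_norm_sq_to_K, hM.eigenvectorBasis.orthonormal.1 j]
    norm_num
  have h2 : star ⇑(hM.eigenvectorBasis j) ⬝ᵥ ⇑(hM.eigenvectorBasis j) = 1 :=
    (dotProduct_comm _ _).trans ((EuclideanSpace.inner_eq_star_dotProduct (hM.eigenvectorBasis j)
      (hM.eigenvectorBasis j)).symm.trans h1)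
  rw [h2]
  simp

end StmtAux

/-- for `2 × 2` positive definite matrices of determinant one,
`‖A + B‖ ≤ √(det(A+B) ‖A‖ ‖B‖)` (operator norm). -/
theorem stmt18 (A B : Matrix (Fin 2) (Fin 2) ℂ) (hA : A.PosDef) (hB : B.PosDef)
    (hdA : A.det = 1) (hdB : B.det = 1) :
    ‖A + B‖ ≤ Real.sqrt (((A + B).det).re * ‖A‖ * ‖B‖) := by
  have hAH := hA.1
  have hBH := hB.1
  have hM : (A + B).IsHermitian := hAH.add hBH
  have hMPD : (A + B).PosDef := hA.add hB
  have ha0 : 0 < ‖A‖ := lt_of_lt_of_le (hA.eigenvalues_pos 0) (aux_eig_le_norm A hAH 0)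
  have hb0 : 0 < ‖B‖ := lt_of_lt_of_le (hB.eigenvalues_pos 0) (aux_eig_le_norm B hBH 0)
  have hprodA : hAH.eigenvalues 0 * hAH.eigenvalues 1 = 1 := by
    have h := hAH.det_eq_prod_eigenvalues
    rw [hdA, Fin.prod_univ_two] at h
    norm_cast at h
    exact RCLike.ofReal_injective (K := ℂ) (h.symm.trans (map_one (algebraMap ℝ ℂ)).symm)
  have hprodB : hBH.eigenvalues 0 * hBH.eigenvalues 1 = 1 := by
    have h := hBH.det_eq_prod_eigenvalues
    rw [hdB, Fin.prod_univ_two] at h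
    norm_cast at h
    exact RCLike.ofReal_injective (K := ℂ) (h.symm.trans (map_one (algebraMap ℝ ℂ)).symm)
  have hminA : ∀ i, 1 / ‖A‖ ≤ hAH.eigenvalues i := by
    have h0 : 1 / ‖A‖ ≤ hAH.eigenvalues 0 := by
      rw [div_le_iff₀ ha0]
      nlinarith [hA.eigenvalues_pos 0, hA.eigenvalues_pos 1, aux_eig_le_norm A hAH 1]
    have h1 : 1 / ‖A‖ ≤ hAH.eigenvalues 1 := by
      rw [div_le_iff₀ ha0]
      nlinarith [hA.eigenvalues_pos 0, hA.eigenvalues_pos 1, aux_eig_le_norm A hAH 0]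
    intro i
    fin_cases i
    exacts [h0, h1]
  have hminB : ∀ i, 1 / ‖B‖ ≤ hBH.eigenvalues i := by
    have h0 : 1 / ‖B‖ ≤ hBH.eigenvalues 0 := by
      rw [div_le_iff₀ hb0]
      nlinarith [hB.eigenvalues_pos 0, hB.eigenvalues_pos 1, aux_eig_le_norm B hBH 1]
    have h1 : 1 / ‖B‖ ≤ hBH.eigenvalues 1 := by
      rw [div_le_iff₀ hb0]
      nlinarith [hB.eigenvalues_pos 0, hB.eigenvalues_pos 1, aux_eig_le_norm B hBH 0]
    intro i
    fin_cases i
    exacts [h0, h1]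
  have hminM : ∀ j, 1 / ‖A‖ + 1 / ‖B‖ ≤ hM.eigenvalues j := by
    intro j
    have hval := hM.eigenvalues_eq j
    rw [Matrix.add_mulVec, dotProduct_add] at hval
    simp only [map_add, RCLike.re_to_complex] at hval
    have hqA := aux_qf A hAH hminA ⇑(hM.eigenvectorBasis j)
    have hqB := aux_qf B hBH hminB ⇑(hM.eigenvectorBasis j)
    rw [aux_unit (A + B) hM j, mul_one] at hqA hqB
    linarith
  have hdet : ((A + B).det).re = hM.eigenvalues 0 * hM.eigenvalues 1 := by
    rw [hM.det_eq_prod_eigenvalues, Fin.prod_univ_two]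
    norm_cast
  obtain ⟨i, hi0⟩ := aux_norm_eq_eig (A + B) hMPD
  have hi : ‖A + B‖ = hM.eigenvalues i := hi0
  have htri : ‖A + B‖ ≤ ‖A‖ + ‖B‖ := norm_add_le A B
  have hnn : (0 : ℝ) ≤ ‖A + B‖ := norm_nonneg _
  apply Real.le_sqrt_of_sq_le
  have hab : (1 / ‖A‖ + 1 / ‖B‖) * (‖A‖ * ‖B‖) = ‖B‖ + ‖A‖ := by field_simp
  have habpos : (0 : ℝ) < ‖A‖ * ‖B‖ := mul_pos ha0 hb0
  have hcase : i = 0 ∨ i = 1 := by omega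
  rcases hcase with rfl | rfl
  · have h1 : (1 / ‖A‖ + 1 / ‖B‖) * (‖A‖ * ‖B‖) ≤ hM.eigenvalues 1 * (‖A‖ * ‖B‖) :=
      mul_le_mul_of_nonneg_right (hminM 1) habpos.le
    rw [hab] at h1
    calc ‖A + B‖ ^ 2 = ‖A + B‖ * ‖A + B‖ := sq ‖A + B‖
      _ ≤ ‖A + B‖ * (‖B‖ + ‖A‖) := by nlinarith
      _ ≤ ‖A + B‖ * (hM.eigenvalues 1 * (‖A‖ * ‖B‖)) := by nlinarith
      _ = ((A + B).det).re * ‖A‖ * ‖B‖ := by rw [hdet, hi]; ring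
  · have h1 : (1 / ‖A‖ + 1 / ‖B‖) * (‖A‖ * ‖B‖) ≤ hM.eigenvalues 0 * (‖A‖ * ‖B‖) :=
      mul_le_mul_of_nonneg_right (hminM 0) habpos.le
    rw [hab] at h1
    calc ‖A + B‖ ^ 2 = ‖A + B‖ * ‖A + B‖ := sq ‖A + B‖
      _ ≤ ‖A + B‖ * (‖B‖ + ‖A‖) := by nlinarith
      _ ≤ ‖A + B‖ * (hM.eigenvalues 0 * (‖A‖ * ‖B‖)) := by nlinarith
      _ = ((A + B).det).re * ‖A‖ * ‖B‖ := by rw [hdet, hi]; ring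
end
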